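/- arXiv:1505.06898 — 6 statements merged into one kernel-verified Lean document; each statement's English description precedes it below -/
import Mathlib

section
/- Let G be a finite acyclic digraph with distinguished set X, let χ be a character on X, and let G' be obtained from G by contracting a vertex v ∉ X with in-degree one and out-degree one (i.e., replacing the two edges (u,v),(v,w) by the single edge (u,w) and removing v). Then the hardwired parsimony score of χ on G' equals the hardwired parsimony score of χ on G, in particular it does not increase. -/
open scoped Classical

structure Digraph' (V : Type) where
  edges : Finset (V × V)

namespace Digraph'

variable {V W X C : Type}

noncomputable def indeg (G : Digraph' V) (v : V) : ℕ :=
  (G.edges.filter fun e => e.2 = v).card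

noncomputable def outdeg (G : Digraph' V) (v : V) : ℕ :=
  (G.edges.filter fun e => e.1 = v).card

def Acyclic (G : Digraph' V) : Prop :=
  ∀ v : V, ¬ Relation.TransGen (fun a b => (a, b) ∈ G.edges) v v

/-- changing number: edges whose endpoints get different states -/
noncomputable def ch (G : Digraph' V) (f : V → C) : ℕ :=
  (G.edges.filter fun e => f e.1 ≠ f e.2).card

/-- `f` extends the character `χ` on the (distinguished) leaves -/
def Extends (leaf : X → V) (χ : X → C) (f : V → C) : Prop :=
  ∀ x, f (leaf x) = χ x

/-- hardwired parsimony score -/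
noncomputable def psHard (G : Digraph' V) (leaf : X → V) (χ : X → C) : ℕ :=
  sInf {n | ∃ f : V → C, Extends leaf χ f ∧ ch G f = n}

structure IsPhyloNetwork (G : Digraph' V) (root : V) (leaf : X → V) : Prop where
  acyclic : G.Acyclic
  leaf_inj : Function.Injective leaf
  reach : ∀ v : V, Relation.ReflTransGen (fun a b => (a, b) ∈ G.edges) root v
  leaf_iff : ∀ v : V, (∃ x, leaf x = v) ↔ G.indeg v = 1 ∧ G.outdeg v = 0
  root_out : 2 ≤ G.outdeg root
  root_in : G.indeg root = 0
  internal : ∀ v : V, v ≠ root → ¬(∃ x, leaf x = v) →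
      (G.indeg v = 1 ∧ 2 ≤ G.outdeg v) ∨ (2 ≤ G.indeg v ∧ G.outdeg v = 1)

def IsPhyloTree (G : Digraph' V) (root : V) (leaf : X → V) : Prop :=
  IsPhyloNetwork G root leaf ∧ ∀ v : V, G.indeg v ≤ 1

def IsBinaryPhyloTree (G : Digraph' V) (root : V) (leaf : X → V) : Prop :=
  IsPhyloTree G root leaf ∧ G.outdeg root = 2 ∧
    ∀ v : V, v ≠ root → ¬(∃ x, leaf x = v) → G.outdeg v = 2

def internalVerts (l : List V) : List V := (l.drop 1).dropLast

def pathEdges (l : List V) : List (V × V) := l.zip l.tail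

/-- `T` is displayed by `N`: an embedding of a subdivision of `T` into `N`,
    mapping leaves to leaves, tree edges to directed paths that are internally
    disjoint from each other and from the images of tree vertices. -/
def Displays (N : Digraph' V) (leafN : X → V) (T : Digraph' W) (leafT : X → W) : Prop :=
  ∃ φ : W → V, Function.Injective φ ∧ (∀ x, φ (leafT x) = leafN x) ∧
    ∃ P : W → W → List V, ∀ e ∈ T.edges,
      (P e.1 e.2).Chain' (fun a b => (a, b) ∈ N.edges) ∧
      (P e.1 e.2).head? = some (φ e.1) ∧
      (P e.1 e.2).getLast? = some (φ e.2) ∧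
      2 ≤ (P e.1 e.2).length ∧
      (P e.1 e.2).Nodup ∧
      (∀ w ∈ internalVerts (P e.1 e.2), w ∉ Set.range φ) ∧
      ∀ e' ∈ T.edges, e ≠ e' →
        (∀ w ∈ internalVerts (P e.1 e.2), w ∉ internalVerts (P e'.1 e'.2)) ∧
        ∀ p ∈ pathEdges (P e.1 e.2), p ∉ pathEdges (P e'.1 e'.2)

/-- softwired parsimony score of a single character -/
noncomputable def psSoft (N : Digraph' V) (leafN : X → V) (χ : X → C) : ℕ :=
  sInf {n | ∃ (W : Type) (T : Digraph' W) (rootT : W) (leafT : X → W),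
    IsPhyloTree T rootT leafT ∧ Displays N leafN T leafT ∧ psHard T leafT χ = n}

noncomputable def psHardSeq (G : Digraph' V) (leaf : X → V) {k : ℕ} (S : Fin k → X → C) : ℕ :=
  ∑ i, psHard G leaf (S i)

noncomputable def psSoftSeq (N : Digraph' V) (leafN : X → V) {k : ℕ} (S : Fin k → X → C) : ℕ :=
  ∑ i, psSoft N leafN (S i)

/-- a switching keeps all edges into non-reticulations and exactly one
    in-edge per reticulation -/
def IsSwitching (N T : Digraph' V) : Prop :=
  T.edges ⊆ N.edges ∧ (∀ e ∈ N.edges, N.indeg e.2 ≤ 1 → e ∈ T.edges) ∧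
    ∀ v : V, 2 ≤ N.indeg v → T.indeg v = 1

/-- number of negligible edges under `f` -/
noncomputable def negl (N : Digraph' V) (f : V → C) : ℕ :=
  (N.edges.filter fun e =>
    2 ≤ N.indeg e.2 ∧ f e.1 ≠ f e.2 ∧ ∃ p, (p, e.2) ∈ N.edges ∧ f p = f e.2).card

/-- isomorphism of leaf-labelled digraphs -/
def Iso {W' : Type} (T : Digraph' W) (leafT : X → W) (T' : Digraph' W') (leafT' : X → W') : Prop :=
  ∃ g : W ≃ W', (∀ u v : W, (u, v) ∈ T.edges ↔ (g u, g v) ∈ T'.edges) ∧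
    ∀ x, g (leafT x) = leafT' x

end Digraph'

open Digraph'

/-- contracting an in-degree-one out-degree-one non-leaf vertex
    leaves the hardwired parsimony score unchanged. -/
theorem stmt1 {V X C : Type} (G : Digraph' V) (leaf : X → V) (χ : X → C)
    (hacyc : G.Acyclic) (hleaf_out : ∀ x, G.outdeg (leaf x) = 0)
    (u v w : V) (huv : (u, v) ∈ G.edges) (hvw : (v, w) ∈ G.edges)
    (hin : G.indeg v = 1) (hout : G.outdeg v = 1)
    (hnotleaf : ¬ ∃ x, leaf x = v) (hnew : (u, w) ∉ G.edges) :
    psHard (Digraph'.mk (insert (u, w) ((G.edges.erase (u, v)).erase (v, w)))) leaf χ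
      = psHard G leaf χ := by
  classical
  set rest := (G.edges.erase (u, v)).erase (v, w) with hrest_def
  have huv_ne : u ≠ v := by
    rintro rfl; exact hacyc u (Relation.TransGen.single huv)
  have hvw_ne : v ≠ w := by
    rintro rfl; exact hacyc v (Relation.TransGen.single hvw)
  have huw_ne : u ≠ w := by
    rintro rfl
    exact hacyc u (Relation.TransGen.head huv (Relation.TransGen.single hvw))
  have hpair1 : (u, v) ≠ (v, w) := fun h => huv_ne (congrArg Prod.fst h)
  have hrest_sub : rest ⊆ G.edges := fun e he =>
    Finset.mem_of_mem_erase (Finset.mem_of_mem_erase he)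
  have huv_rest : (u, v) ∉ rest := fun h =>
    (Finset.mem_erase.mp (Finset.mem_erase.mp h).2).1 rfl
  have hvw_rest : (v, w) ∉ rest := fun h => (Finset.mem_erase.mp h).1 rfl
  have huw_rest : (u, w) ∉ rest := fun h => hnew (hrest_sub h)
  have hin1 : ∀ e ∈ G.edges, e.2 = v → e = (u, v) := by
    intro e he hev
    have h1 : e ∈ G.edges.filter (fun e => e.2 = v) := Finset.mem_filter.mpr ⟨he, hev⟩
    have h2 : (u, v) ∈ G.edges.filter (fun e => e.2 = v) := Finset.mem_filter.mpr ⟨huv, rfl⟩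
    have hc : (G.edges.filter (fun e => e.2 = v)).card ≤ 1 := le_of_eq hin
    exact Finset.card_le_one.mp hc e h1 (u, v) h2
  have hout1 : ∀ e ∈ G.edges, e.1 = v → e = (v, w) := by
    intro e he hev
    have h1 : e ∈ G.edges.filter (fun e => e.1 = v) := Finset.mem_filter.mpr ⟨he, hev⟩
    have h2 : (v, w) ∈ G.edges.filter (fun e => e.1 = v) := Finset.mem_filter.mpr ⟨hvw, rfl⟩
    have hc : (G.edges.filter (fun e => e.1 = v)).card ≤ 1 := le_of_eq hout
    exact Finset.card_le_one.mp hc e h1 (v, w) h2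
  have hnov : ∀ e ∈ rest, e.1 ≠ v ∧ e.2 ≠ v := by
    intro e he
    constructor
    · intro h1
      exact hvw_rest (hout1 e (hrest_sub he) h1 ▸ he)
    · intro h2
      exact huv_rest (hin1 e (hrest_sub he) h2 ▸ he)
  have hGeq : insert (u, v) (insert (v, w) rest) = G.edges := by
    have h1 : (v, w) ∈ G.edges.erase (u, v) :=
      Finset.mem_erase.mpr ⟨fun h => hpair1 h.symm, hvw⟩
    rw [hrest_def, Finset.insert_erase h1, Finset.insert_erase huv]
  have chsum : ∀ (H : Digraph' V) (f : V → C),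
      ch H f = ∑ e ∈ H.edges, if f e.1 ≠ f e.2 then 1 else 0 := by
    intro H f
    simp [ch, Finset.card_filter]
  have chG : ∀ f : V → C, ch G f = (if f u ≠ f v then 1 else 0) +
      ((if f v ≠ f w then 1 else 0) + ∑ e ∈ rest, if f e.1 ≠ f e.2 then 1 else 0) := by
    intro f
    rw [chsum, ← hGeq, Finset.sum_insert (by simp [hpair1, huv_rest]),
      Finset.sum_insert hvw_rest]
  have chG' : ∀ f : V → C,
      ch (Digraph'.mk (insert (u, w) rest)) f =
        (if f u ≠ f w then 1 else 0) + ∑ e ∈ rest, if f e.1 ≠ f e.2 then 1 else 0 := by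
    intro f
    rw [chsum, Finset.sum_insert huw_rest]
  have key1 : ∀ f : V → C, ch (Digraph'.mk (insert (u, w) rest)) f ≤ ch G f := by
    intro f
    rw [chG, chG']
    have h : (if f u ≠ f w then 1 else 0) ≤
        (if f u ≠ f v then 1 else 0) + (if f v ≠ f w then 1 else 0) := by
      by_cases h1 : f u = f v <;> by_cases h2 : f v = f w
      · simp [h1, h2, h1.trans h2]
      · simp [h1, h2]
      · simp [h1, h2]
      · simp only [h1, h2, ne_eq, not_false_eq_true, if_true]
        split <;> omega
    omega
  have key2 : ∀ f : V → C,
      ch G (Function.update f v (f w)) = ch (Digraph'.mk (insert (u, w) rest)) f := by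
    intro f
    rw [chG, chG']
    have hgu : Function.update f v (f w) u = f u := Function.update_of_ne huv_ne _ _
    have hgv : Function.update f v (f w) v = f w := Function.update_self _ _ _
    have hgw : Function.update f v (f w) w = f w :=
      Function.update_of_ne (Ne.symm hvw_ne) _ _
    rw [hgu, hgv, hgw]
    simp only [ne_eq, not_true_eq_false, if_false, zero_add]
    congr 1
    apply Finset.sum_congr rfl
    intro e he
    obtain ⟨h1, h2⟩ := hnov e he
    rw [Function.update_of_ne h1, Function.update_of_ne h2]
  -- the two feasible sets are nonempty simultaneously
  by_cases hne : ∃ f : V → C, Extends leaf χ f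
  · apply le_antisymm
    · have hS : {n | ∃ f : V → C, Extends leaf χ f ∧ ch G f = n}.Nonempty :=
        hne.elim fun f hf => ⟨ch G f, f, hf, rfl⟩
      obtain ⟨f, hf, hfe⟩ := Nat.sInf_mem hS
      calc psHard (Digraph'.mk (insert (u, w) rest)) leaf χ
          ≤ ch (Digraph'.mk (insert (u, w) rest)) f := Nat.sInf_le ⟨f, hf, rfl⟩
        _ ≤ ch G f := key1 f
        _ = psHard G leaf χ := hfe
    · have hS' : {n | ∃ f : V → C, Extends leaf χ f ∧
          ch (Digraph'.mk (insert (u, w) rest)) f = n}.Nonempty :=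
        hne.elim fun f hf => ⟨_, f, hf, rfl⟩
      obtain ⟨f, hf, hfe⟩ := Nat.sInf_mem hS'
      have hExt : Extends leaf χ (Function.update f v (f w)) := by
        intro x
        rw [Function.update_of_ne (fun h => hnotleaf ⟨x, h⟩)]
        exact hf x
      calc psHard G leaf χ ≤ ch G (Function.update f v (f w)) :=
            Nat.sInf_le ⟨_, hExt, rfl⟩
        _ = ch (Digraph'.mk (insert (u, w) rest)) f := key2 f
        _ = psHard (Digraph'.mk (insert (u, w) rest)) leaf χ := hfe
  · have h1 : ∀ (H : Digraph' V), {n | ∃ f : V → C, Extends leaf χ f ∧ ch H f = n} = ∅ := by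
      intro H
      ext n
      simp only [Set.mem_setOf_eq, Set.mem_empty_iff_false, iff_false]
      rintro ⟨f, hf, -⟩
      exact hne ⟨f, hf⟩
    rw [psHard, psHard, h1, h1]
end

section
/- Let N be a rooted phylogenetic network on X, let T be a rooted phylogenetic tree on X displayed by N, let χ be a character on X, and let χ̄ be any extension of χ to V(N). Then there exists an extension χ̄₁ of χ to V(T) such that ch(χ̄,N) ≥ ch(χ̄₁,T). -/
open scoped Classical

open Digraph'

lemma aux_exists_change {V C : Type} (f : V → C) (R : V → V → Prop) :
    ∀ (l : List V) (a b : V), l.Chain' R → l.head? = some a → l.getLast? = some b →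
      f a ≠ f b → ∃ p ∈ l.zip l.tail, R p.1 p.2 ∧ f p.1 ≠ f p.2 := by
  intro l
  induction l with
  | nil => intro a b _ h; simp at h
  | cons x rest ih =>
    intro a b hch hhead hlast hne
    cases rest with
    | nil =>
      simp at hhead hlast
      exact absurd (hhead ▸ hlast ▸ rfl) hne
    | cons y rest' =>
      have hxa : x = a := by simpa using hhead
      have hRxy : R x y ∧ (y :: rest').Chain' R := by
        simpa [List.Chain', List.isChain_cons_cons] using hch
      by_cases hxy : f x = f y
      · have hlast' : (y :: rest').getLast? = some b := by
          rw [← hlast]; simp [List.getLast?_cons_cons]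
        have hne' : f y ≠ f b := by rw [← hxy, hxa]; exact hne
        obtain ⟨p, hp, hR, hfp⟩ := ih y b hRxy.2 (by simp) hlast' hne'
        exact ⟨p, by simp [List.zip_cons_cons]; right; exact hp, hR, hfp⟩
      · exact ⟨(x, y), by simp [List.zip_cons_cons], hRxy.1, hxy⟩

/-- any extension of χ to a network N induces an extension to a
    displayed tree T with changing number at most that on N. -/
theorem stmt2 {V W X C : Type} (N : Digraph' V) (rootN : V) (leafN : X → V)
    (T : Digraph' W) (rootT : W) (leafT : X → W)
    (hN : IsPhyloNetwork N rootN leafN) (hT : IsPhyloTree T rootT leafT)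
    (hD : Displays N leafN T leafT)
    (χ : X → C) (f : V → C) (hf : Extends leafN χ f) :
    ∃ g : W → C, Extends leafT χ g ∧ ch T g ≤ ch N f := by
  obtain ⟨φ, hφinj, hφleaf, P, hP⟩ := hD
  refine ⟨fun w => f (φ w), fun x => by show f (φ (leafT x)) = χ x; rw [hφleaf x]; exact hf x, ?_⟩
  unfold ch
  -- condition: path of e contains an N-edge where f changes
  set Cond : W × W → Prop := fun e =>
    ∃ p ∈ (P e.1 e.2).zip (P e.1 e.2).tail, p ∈ N.edges ∧ f p.1 ≠ f p.2 with hCond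
  have hCondHolds : ∀ e ∈ T.edges.filter (fun e => f (φ e.1) ≠ f (φ e.2)), Cond e := by
    intro e he
    rw [Finset.mem_filter] at he
    obtain ⟨hch, hhead, hlast, _, _, _, _⟩ := hP e he.1
    exact aux_exists_change f _ _ _ _ hch hhead hlast he.2
  set F : W × W → V × V := fun e =>
    if h : Cond e then h.choose else (rootN, rootN) with hF
  apply Finset.card_le_card_of_injOn F
  · intro e he
    have hc := hCondHolds e he
    have := hc.choose_spec
    rw [Finset.mem_coe, Finset.mem_filter]
    simp only [hF, dif_pos hc]
    exact ⟨this.2.1, this.2.2⟩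
  · intro e he e' he' heq
    rw [Finset.mem_coe] at he he'
    by_contra hne
    have hc := hCondHolds e he
    have hc' := hCondHolds e' he'
    have hs := hc.choose_spec
    have hs' := hc'.choose_spec
    rw [Finset.mem_filter] at he he'
    obtain ⟨_, _, _, _, _, _, hdisj⟩ := hP e he.1
    have := (hdisj e' he'.1 hne).2 hc.choose hs.1
    apply this
    have : F e = F e' := heq
    simp only [hF, dif_pos hc, dif_pos hc'] at this
    rw [show (pathEdges (P e'.1 e'.2)) = (P e'.1 e'.2).zip (P e'.1 e'.2).tail from rfl]
    rw [this]
    exact hs'.1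
end

section
/- For every finite sequence S of characters on a finite set X, there exists a rooted phylogenetic tree T on X such that PS_hard(S,T) ≤ PS_hard(S,N) for every rooted phylogenetic network N on X; that is, a hardwired maximum parsimony network for S can always be chosen to be a tree. -/
open scoped Classical

open Digraph'

namespace Stmt3Aux
open Digraph'

set_option linter.unusedSectionVars false

variable {X C V : Type} [Fintype X]
variable {N : Digraph' V} {r : V} {lf : X → V}

lemma finiteV (hN : IsPhyloNetwork N r lf) : Finite V := by
  have h : (Set.univ : Set V) ⊆ insert r ((fun e : V × V => e.2) '' ↑N.edges) := by
    intro v _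
    rcases Relation.ReflTransGen.cases_tail (hN.reach v) with h | ⟨c, _, hc⟩
    · exact Set.mem_insert_iff.2 (Or.inl h)
    · exact Set.mem_insert_of_mem _ ⟨(c, v), hc, rfl⟩
  have hfin : (Set.univ : Set V).Finite :=
    Set.Finite.subset ((N.edges.finite_toSet.image _).insert r) h
  rwa [Set.finite_univ_iff] at hfin

lemma wfEdge (hN : IsPhyloNetwork N r lf) :
    WellFounded (fun a b : V => (a, b) ∈ N.edges) := by
  haveI := finiteV hN
  haveI h1 : IsTrans V (Relation.TransGen fun a b : V => (a, b) ∈ N.edges) :=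
    ⟨fun _ _ _ => Relation.TransGen.trans⟩
  haveI h2 : IsIrrefl V (Relation.TransGen fun a b : V => (a, b) ∈ N.edges) :=
    ⟨hN.acyclic⟩
  exact Subrelation.wf (fun h => Relation.TransGen.single h)
    (@Finite.wellFounded_of_trans_of_irrefl V _ _ h1 h2)

lemma exists_in_edge (hN : IsPhyloNetwork N r lf) {v : V} (hv : v ≠ r) :
    ∃ u, (u, v) ∈ N.edges := by
  rcases Relation.ReflTransGen.cases_tail (hN.reach v) with h | ⟨c, _, hc⟩
  · exact absurd h hv
  · exact ⟨c, hc⟩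

noncomputable def par (hN : IsPhyloNetwork N r lf) (v : V) : V :=
  if h : v = r then r else (exists_in_edge hN h).choose

lemma par_mem (hN : IsPhyloNetwork N r lf) {v : V} (hv : v ≠ r) :
    (par hN v, v) ∈ N.edges := by
  rw [par, dif_neg hv]; exact (exists_in_edge hN hv).choose_spec

lemma par_root (hN : IsPhyloNetwork N r lf) : par hN r = r := dif_pos rfl

lemma iter_par_root (hN : IsPhyloNetwork N r lf) (n : ℕ) : (par hN)^[n] r = r :=
  Function.iterate_fixed (par_root hN) n

/-- `a` is an ancestor of `b` in the chosen spanning tree -/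
def Anc (hN : IsPhyloNetwork N r lf) (a b : V) : Prop := ∃ n, (par hN)^[n] b = a

lemma anc_refl (hN : IsPhyloNetwork N r lf) (a : V) : Anc hN a a := ⟨0, rfl⟩

lemma anc_trans (hN : IsPhyloNetwork N r lf) {a b c : V}
    (h1 : Anc hN a b) (h2 : Anc hN b c) : Anc hN a c := by
  obtain ⟨n, hn⟩ := h1; obtain ⟨m, hm⟩ := h2
  exact ⟨n + m, by rw [Function.iterate_add_apply, hm, hn]⟩

lemma anc_root (hN : IsPhyloNetwork N r lf) (v : V) : Anc hN r v := by
  refine WellFounded.induction (wfEdge hN) (C := fun u => Anc hN r u) v ?_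
  intro x ih
  by_cases hx : x = r
  · exact ⟨0, hx⟩
  · obtain ⟨n, hn⟩ := ih (par hN x) (par_mem hN hx)
    exact ⟨n + 1, by rw [Function.iterate_succ_apply]; exact hn⟩

lemma iterate_eq_self (hN : IsPhyloNetwork N r lf) {v : V} {k : ℕ} (hk : 1 ≤ k)
    (h : (par hN)^[k] v = v) : v = r := by
  by_contra hv
  have hne : ∀ i < k, (par hN)^[i] v ≠ r := by
    intro i hi hir
    apply hv
    have : (par hN)^[k] v = r := by
      rw [show k = (k - i) + i from (Nat.sub_add_cancel hi.le).symm,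
        Function.iterate_add_apply, hir, iter_par_root]
    rw [← h, this]
  have key : ∀ j, j + 1 ≤ k →
      Relation.TransGen (fun a b : V => (a, b) ∈ N.edges) ((par hN)^[j+1] v) v := by
    intro j
    induction j with
    | zero => intro _; exact Relation.TransGen.single (par_mem hN hv)
    | succ j ih =>
      intro hj
      have hmem : ((par hN)^[j+2] v, (par hN)^[j+1] v) ∈ N.edges := by
        rw [Function.iterate_succ_apply' (par hN) (j+1) v]
        exact par_mem hN (hne _ (by omega))
      exact Relation.TransGen.head hmem (ih (by omega))
  obtain ⟨j, rfl⟩ : ∃ j, k = j + 1 := ⟨k - 1, (Nat.succ_pred_eq_of_pos hk).symm⟩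
  have := key j le_rfl
  rw [h] at this
  exact hN.acyclic v this

lemma anc_antisymm (hN : IsPhyloNetwork N r lf) {a b : V}
    (hab : Anc hN a b) (hba : Anc hN b a) : a = b := by
  obtain ⟨n, hn⟩ := hab; obtain ⟨m, hm⟩ := hba
  rcases Nat.eq_zero_or_pos (n + m) with h0 | hpos
  · have : n = 0 := by omega
    rw [this] at hn; exact hn.symm
  · have hcyc : (par hN)^[n + m] a = a := by
      rw [Function.iterate_add_apply, hm, hn]
    have ha : a = r := iterate_eq_self hN hpos hcyc
    rw [ha] at hm ⊢
    rw [iter_par_root hN m] at hm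
    exact hm

lemma anc_comp (hN : IsPhyloNetwork N r lf) {a b w : V}
    (ha : Anc hN a w) (hb : Anc hN b w) : Anc hN a b ∨ Anc hN b a := by
  obtain ⟨n, hn⟩ := ha; obtain ⟨m, hm⟩ := hb
  rcases le_total n m with h | h
  · right
    refine ⟨m - n, ?_⟩
    rw [← hn, ← Function.iterate_add_apply, Nat.sub_add_cancel h, hm]
  · left
    refine ⟨n - m, ?_⟩
    rw [← hm, ← Function.iterate_add_apply, Nat.sub_add_cancel h, hn]

end Stmt3Aux
namespace Stmt3Aux
open Digraph'

set_option linter.unusedSectionVars false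

variable {X C V : Type} [Fintype X]
variable {N : Digraph' V} {r : V} {lf : X → V}

/-- the cluster (set of leaf-labels below `v` in the spanning tree) -/
noncomputable def clu (hN : IsPhyloNetwork N r lf) (v : V) : Finset X :=
  Finset.univ.filter (fun x => Anc hN v (lf x))

lemma mem_clu (hN : IsPhyloNetwork N r lf) {v : V} {x : X} :
    x ∈ clu hN v ↔ Anc hN v (lf x) := by simp [clu]

lemma clu_mono (hN : IsPhyloNetwork N r lf) {a b : V} (h : Anc hN a b) :
    clu hN b ⊆ clu hN a := by
  intro x hx
  rw [mem_clu] at hx ⊢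
  exact anc_trans hN h hx

lemma clu_root (hN : IsPhyloNetwork N r lf) : clu hN r = Finset.univ := by
  ext x; simp [mem_clu, anc_root]

lemma root_not_leaf (hN : IsPhyloNetwork N r lf) (x : X) : lf x ≠ r := by
  intro h
  have h0 : N.outdeg (lf x) = 0 := ((hN.leaf_iff (lf x)).1 ⟨x, rfl⟩).2
  have h2 := hN.root_out
  rw [← h, h0] at h2
  omega

lemma leaf_outdeg (hN : IsPhyloNetwork N r lf) {x : X} {u : V}
    (h : (lf x, u) ∈ N.edges) : False := by
  have h0 : N.outdeg (lf x) = 0 := ((hN.leaf_iff (lf x)).1 ⟨x, rfl⟩).2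
  have : (lf x, u) ∈ N.edges.filter (fun e => e.1 = lf x) := by
    simp [Finset.mem_filter, h]
  have := Finset.card_pos.2 ⟨_, this⟩
  rw [Digraph'.outdeg] at h0
  omega

lemma clu_leaf (hN : IsPhyloNetwork N r lf) (x : X) : clu hN (lf x) = {x} := by
  ext y
  rw [mem_clu, Finset.mem_singleton]
  constructor
  · rintro ⟨n, hn⟩
    cases n with
    | zero => exact hN.leaf_inj hn
    | succ n =>
      exfalso
      rw [Function.iterate_succ_apply'] at hn
      have hne : (par hN)^[n] (lf y) ≠ r := by
        intro h
        rw [h, par_root] at hn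
        exact root_not_leaf hN x hn.symm
      have := par_mem hN hne
      rw [hn] at this
      exact leaf_outdeg hN this
  · rintro rfl
    exact anc_refl hN _

lemma clu_laminar (hN : IsPhyloNetwork N r lf) {u v : V} {x : X}
    (hu : x ∈ clu hN u) (hv : x ∈ clu hN v) :
    clu hN u ⊆ clu hN v ∨ clu hN v ⊆ clu hN u := by
  rw [mem_clu] at hu hv
  rcases anc_comp hN hu hv with h | h
  · exact Or.inr (clu_mono hN h)
  · exact Or.inl (clu_mono hN h)

/-- maximum of a finite nonempty chain -/
lemma exists_greatest {α : Type*} {R : α → α → Prop} (hrefl : ∀ a, R a a)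
    (htr : ∀ {a b c}, R a b → R b c → R a c) (s : Finset α) (hs : s.Nonempty)
    (hchain : ∀ a ∈ s, ∀ b ∈ s, R a b ∨ R b a) :
    ∃ m ∈ s, ∀ a ∈ s, R a m := by
  classical
  induction s using Finset.induction_on with
  | empty => exact absurd hs (by simp)
  | @insert a s ha ih =>
    rcases s.eq_empty_or_nonempty with rfl | hs'
    · exact ⟨a, Finset.mem_insert_self a _, by
        intro b hb
        rw [Finset.mem_insert] at hb
        rcases hb with rfl | hb
        · exact hrefl b
        · simp at hb⟩
    · obtain ⟨m, hm, hmax⟩ := ih hs' (fun a ha b hb =>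
        hchain a (Finset.mem_insert_of_mem ha) b (Finset.mem_insert_of_mem hb))
      rcases hchain a (Finset.mem_insert_self a s) m (Finset.mem_insert_of_mem hm) with h | h
      · refine ⟨m, Finset.mem_insert_of_mem hm, ?_⟩
        intro b hb
        rcases Finset.mem_insert.1 hb with rfl | hb
        · exact h
        · exact hmax b hb
      · refine ⟨a, Finset.mem_insert_self a s, ?_⟩
        intro b hb
        rcases Finset.mem_insert.1 hb with rfl | hb
        · exact hrefl b
        · exact htr (hmax b hb) h

/-- a cluster -/
def Cl (hN : IsPhyloNetwork N r lf) (A : Finset X) : Prop :=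
  A.Nonempty ∧ ∃ v, clu hN v = A

lemma exists_bot (hN : IsPhyloNetwork N r lf) {A : Finset X} (hA : Cl hN A) :
    ∃ v, clu hN v = A ∧ ∀ u, clu hN u = A → Anc hN u v := by
  classical
  haveI := finiteV hN
  haveI : Fintype V := Fintype.ofFinite V
  obtain ⟨⟨x, hx⟩, v0, hv0⟩ := hA
  set s : Finset V := Finset.univ.filter (fun v => clu hN v = A) with hs
  have hsne : s.Nonempty := ⟨v0, by simp [hs, hv0]⟩
  have hchain : ∀ a ∈ s, ∀ b ∈ s, Anc hN a b ∨ Anc hN b a := by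
    intro a ha b hb
    simp only [hs, Finset.mem_filter] at ha hb
    have hax : Anc hN a (lf x) := (mem_clu hN).1 (by rw [ha.2]; exact hx)
    have hbx : Anc hN b (lf x) := (mem_clu hN).1 (by rw [hb.2]; exact hx)
    exact anc_comp hN hax hbx
  obtain ⟨m, hm, hmax⟩ := exists_greatest (anc_refl hN)
    (fun h1 h2 => anc_trans hN h1 h2) s hsne hchain
  simp only [hs, Finset.mem_filter] at hm
  refine ⟨m, hm.2, ?_⟩
  intro u hu
  exact hmax u (by simp [hs, hu])

noncomputable def bot (hN : IsPhyloNetwork N r lf) (A : Finset X) : V :=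
  if h : Cl hN A then (exists_bot hN h).choose else r

lemma bot_clu (hN : IsPhyloNetwork N r lf) {A : Finset X} (hA : Cl hN A) :
    clu hN (bot hN A) = A := by
  rw [bot, dif_pos hA]; exact (exists_bot hN hA).choose_spec.1

lemma bot_min (hN : IsPhyloNetwork N r lf) {A : Finset X} (hA : Cl hN A)
    {u : V} (hu : clu hN u = A) : Anc hN u (bot hN A) := by
  rw [bot, dif_pos hA]; exact (exists_bot hN hA).choose_spec.2 u hu

lemma bot_leaf (hN : IsPhyloNetwork N r lf) (x : X) : bot hN {x} = lf x := by
  have hCl : Cl hN ({x} : Finset X) := ⟨Finset.singleton_nonempty x, lf x, clu_leaf hN x⟩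
  have h1 : Anc hN (lf x) (bot hN {x}) := bot_min hN hCl (clu_leaf hN x)
  have h2 : Anc hN (bot hN {x}) (lf x) := by
    have : x ∈ clu hN (bot hN {x}) := by rw [bot_clu hN hCl]; exact Finset.mem_singleton_self x
    exact (mem_clu hN).1 this
  exact (anc_antisymm hN h2 h1)

end Stmt3Aux
namespace Stmt3Aux
open Digraph'

set_option linter.unusedSectionVars false
set_option maxHeartbeats 1000000

variable {X C V : Type} [Fintype X]
variable {N : Digraph' V} {r : V} {lf : X → V}

/-- vertex type of the constructed tree: the clusters -/
def Wt (hN : IsPhyloNetwork N r lf) : Type := {A : Finset X // Cl hN A}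

instance (hN : IsPhyloNetwork N r lf) : Finite (Wt hN) := by
  unfold Wt; infer_instance

noncomputable instance (hN : IsPhyloNetwork N r lf) : Fintype (Wt hN) :=
  Fintype.ofFinite _

noncomputable def edgesT (hN : IsPhyloNetwork N r lf) : Finset (Wt hN × Wt hN) :=
  Finset.univ.filter (fun e =>
    e.2.1 ⊂ e.1.1 ∧ ∀ Cw : Wt hN, ¬(e.2.1 ⊂ Cw.1 ∧ Cw.1 ⊂ e.1.1))

lemma mem_edgesT (hN : IsPhyloNetwork N r lf) {e : Wt hN × Wt hN} :
    e ∈ edgesT hN ↔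
      e.2.1 ⊂ e.1.1 ∧ ∀ Cw : Wt hN, ¬(e.2.1 ⊂ Cw.1 ∧ Cw.1 ⊂ e.1.1) := by
  simp [edgesT]

noncomputable def TreeD (hN : IsPhyloNetwork N r lf) : Digraph' (Wt hN) :=
  ⟨edgesT hN⟩

noncomputable def rootT (hN : IsPhyloNetwork N r lf) (hX : Nonempty X) : Wt hN :=
  ⟨Finset.univ, Finset.univ_nonempty, r, clu_root hN⟩

noncomputable def leafT (hN : IsPhyloNetwork N r lf) (x : X) : Wt hN :=
  ⟨{x}, Finset.singleton_nonempty x, lf x, clu_leaf hN x⟩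

lemma supersets_chain (hN : IsPhyloNetwork N r lf) {A : Finset X} (hA : A.Nonempty)
    (B B' : Wt hN) (h1 : A ⊆ B.1) (h2 : A ⊆ B'.1) : B.1 ⊆ B'.1 ∨ B'.1 ⊆ B.1 := by
  obtain ⟨x, hx⟩ := hA
  obtain ⟨u, hu⟩ := B.2.2
  obtain ⟨u', hu'⟩ := B'.2.2
  rw [← hu, ← hu']
  exact clu_laminar hN (by rw [hu]; exact h1 hx) (by rw [hu']; exact h2 hx)

lemma exists_par (hN : IsPhyloNetwork N r lf) (hX : Nonempty X) {A : Wt hN}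
    (hA : A ≠ rootT hN hX) :
    ∃ P : Wt hN, A.1 ⊂ P.1 ∧ ∀ Q : Wt hN, A.1 ⊂ Q.1 → P.1 ⊆ Q.1 := by
  classical
  have hAuniv : A.1 ≠ Finset.univ := fun h => hA (Subtype.ext h)
  set s : Finset (Wt hN) := Finset.univ.filter (fun B => A.1 ⊂ B.1) with hs
  have hsne : s.Nonempty :=
    ⟨rootT hN hX, Finset.mem_filter.2 ⟨Finset.mem_univ _, Finset.ssubset_univ_iff.2 hAuniv⟩⟩
  have hchain : ∀ a ∈ s, ∀ b ∈ s, b.1 ⊆ a.1 ∨ a.1 ⊆ b.1 := by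
    intro a ha b hb
    simp only [hs, Finset.mem_filter] at ha hb
    rcases supersets_chain hN A.2.1 a b ha.2.subset hb.2.subset with h | h
    · exact Or.inr h
    · exact Or.inl h
  obtain ⟨m, hm, hmax⟩ := exists_greatest (R := fun a b : Wt hN => b.1 ⊆ a.1)
    (fun a => le_refl _) (fun h1 h2 => le_trans h2 h1) s hsne hchain
  simp only [hs, Finset.mem_filter] at hm
  refine ⟨m, hm.2, ?_⟩
  intro Q hQ
  exact hmax Q (by simp [hs, hQ])

lemma par_edge (hN : IsPhyloNetwork N r lf) (hX : Nonempty X) {A P : Wt hN}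
    (h1 : A.1 ⊂ P.1) (h2 : ∀ Q : Wt hN, A.1 ⊂ Q.1 → P.1 ⊆ Q.1) :
    (P, A) ∈ edgesT hN := by
  rw [mem_edgesT]
  refine ⟨h1, ?_⟩
  rintro Cw ⟨hc1, hc2⟩
  exact hc2.not_subset (h2 Cw hc1)

lemma indegT_eq_one (hN : IsPhyloNetwork N r lf) (hX : Nonempty X) {A : Wt hN}
    (hA : A ≠ rootT hN hX) : (TreeD hN).indeg A = 1 := by
  classical
  obtain ⟨P, h1, h2⟩ := exists_par hN hX hA
  rw [Digraph'.indeg]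
  have : ((TreeD hN).edges.filter fun e => e.2 = A) = {(P, A)} := by
    ext e
    simp only [Finset.mem_filter, Finset.mem_singleton]
    constructor
    · rintro ⟨he, h2e⟩
      rw [show (TreeD hN).edges = edgesT hN from rfl, mem_edgesT] at he
      obtain ⟨Q, B⟩ := e
      cases h2e
      have hQ : P.1 ⊆ Q.1 := h2 Q he.1
      have hQP : Q = P := by
        rcases eq_or_lt_of_le (Finset.le_iff_subset.2 hQ) with h | h
        · exact Subtype.ext h.symm
        · exact absurd ⟨h1, h⟩ (he.2 P)
      rw [hQP]
    · rintro rfl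
      exact ⟨par_edge hN hX h1 h2, rfl⟩
  rw [this, Finset.card_singleton]

lemma indegT_root (hN : IsPhyloNetwork N r lf) (hX : Nonempty X) :
    (TreeD hN).indeg (rootT hN hX) = 0 := by
  classical
  rw [Digraph'.indeg, Finset.card_eq_zero]
  rw [Finset.filter_eq_empty_iff]
  intro e he
  rw [show (TreeD hN).edges = edgesT hN from rfl, mem_edgesT] at he
  intro h2e
  have h := he.1
  rw [h2e] at h
  have h2 : (rootT hN hX).1 = Finset.univ := rfl
  rw [h2] at h
  exact h.not_subset (Finset.subset_univ _)

end Stmt3Aux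
namespace Stmt3Aux
open Digraph'

set_option linter.unusedSectionVars false
set_option linter.unusedVariables false
set_option maxHeartbeats 1000000

variable {X C V : Type} [Fintype X]
variable {N : Digraph' V} {r : V} {lf : X → V}

lemma exists_child (hN : IsPhyloNetwork N r lf) {A : Wt hN} {x : X}
    (hx : x ∈ A.1) (hA : A.1 ≠ {x}) :
    ∃ Cc : Wt hN, (A, Cc) ∈ edgesT hN ∧ x ∈ Cc.1 := by
  classical
  set s : Finset (Wt hN) := Finset.univ.filter (fun B => B.1 ⊂ A.1 ∧ x ∈ B.1) with hs
  have hsne : s.Nonempty := by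
    refine ⟨leafT hN x, ?_⟩
    simp only [hs, Finset.mem_filter, Finset.mem_univ, true_and]
    constructor
    · exact Finset.ssubset_iff_subset_ne.2 ⟨Finset.singleton_subset_iff.2 hx, fun h => hA h.symm⟩
    · exact Finset.mem_singleton_self x
  have hchain : ∀ a ∈ s, ∀ b ∈ s, a.1 ⊆ b.1 ∨ b.1 ⊆ a.1 := by
    intro a ha b hb
    simp only [hs, Finset.mem_filter] at ha hb
    exact supersets_chain hN ⟨x, Finset.mem_singleton_self x⟩ a b
      (Finset.singleton_subset_iff.2 ha.2.2) (Finset.singleton_subset_iff.2 hb.2.2)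
  obtain ⟨m, hm, hmax⟩ := exists_greatest (R := fun a b : Wt hN => a.1 ⊆ b.1)
    (fun a => le_refl _) (fun h1 h2 => le_trans h1 h2) s hsne hchain
  simp only [hs, Finset.mem_filter] at hm
  refine ⟨m, ?_, hm.2.2⟩
  rw [mem_edgesT]
  refine ⟨hm.2.1, ?_⟩
  rintro Cw ⟨hc1, hc2⟩
  have : Cw ∈ s := by
    simp only [hs, Finset.mem_filter, Finset.mem_univ, true_and]
    exact ⟨hc2, hc1.subset (hm.2.2)⟩
  exact hc1.not_subset (hmax Cw this)

lemma outdegT_ge_two (hN : IsPhyloNetwork N r lf) {A : Wt hN}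
    (hA : ∀ z, A.1 ≠ {z}) : 2 ≤ (TreeD hN).outdeg A := by
  classical
  have hch : ∀ z ∈ A.1, ∃ Cc : Wt hN, (A, Cc) ∈ edgesT hN ∧ z ∈ Cc.1 :=
    fun z hz => exists_child hN hz (hA z)
  by_contra hlt
  push_neg at hlt
  have hcard : ((TreeD hN).edges.filter fun e => e.1 = A).card ≤ 1 := by
    rw [Digraph'.outdeg] at hlt; omega
  obtain ⟨x0, hx0⟩ := A.2.1
  obtain ⟨C0, hC0, hxC0⟩ := hch x0 hx0
  have hsub : A.1 ⊆ C0.1 := by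
    intro z hz
    obtain ⟨Cz, hCz, hzCz⟩ := hch z hz
    have h1 : (A, Cz) ∈ (TreeD hN).edges.filter fun e => e.1 = A := by
      simp [Finset.mem_filter]; exact hCz
    have h2 : (A, C0) ∈ (TreeD hN).edges.filter fun e => e.1 = A := by
      simp [Finset.mem_filter]; exact hC0
    have := Finset.card_le_one.1 hcard _ h1 _ h2
    have hCzC0 : Cz = C0 := congrArg Prod.snd this
    rw [← hCzC0]; exact hzCz
  have := ((mem_edgesT hN).1 hC0).1
  exact this.not_subset hsub

lemma outdegT_singleton (hN : IsPhyloNetwork N r lf) {A : Wt hN} {x : X}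
    (hA : A.1 = {x}) : (TreeD hN).outdeg A = 0 := by
  classical
  rw [Digraph'.outdeg, Finset.card_eq_zero, Finset.filter_eq_empty_iff]
  intro e he
  rw [show (TreeD hN).edges = edgesT hN from rfl, mem_edgesT] at he
  intro h1e
  have h := he.1
  rw [h1e, hA] at h
  rcases Finset.ssubset_singleton_iff.1 h with h0
  exact (e.2.2.1).ne_empty h0

lemma edgeT_ssubset (hN : IsPhyloNetwork N r lf) {a b : Wt hN}
    (h : Relation.TransGen (fun a b : Wt hN => (a, b) ∈ (TreeD hN).edges) a b) :
    b.1 ⊂ a.1 := by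
  induction h with
  | single he => exact ((mem_edgesT hN).1 he).1
  | tail _ he ih => exact lt_trans ((mem_edgesT hN).1 he).1 ih

lemma acyclicT (hN : IsPhyloNetwork N r lf) : (TreeD hN).Acyclic := by
  intro v hv
  exact (edgeT_ssubset hN hv).ne rfl

lemma reachT (hN : IsPhyloNetwork N r lf) (hX : Nonempty X) (A : Wt hN) :
    Relation.ReflTransGen (fun a b : Wt hN => (a, b) ∈ (TreeD hN).edges)
      (rootT hN hX) A := by
  classical
  suffices h : ∀ n (A : Wt hN), Fintype.card X - A.1.card ≤ n →
      Relation.ReflTransGen (fun a b : Wt hN => (a, b) ∈ (TreeD hN).edges)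
        (rootT hN hX) A from h _ A le_rfl
  intro n
  induction n with
  | zero =>
    intro A hle
    by_cases hA : A = rootT hN hX
    · rw [hA]
    · exfalso
      have hAuniv : A.1 ≠ Finset.univ := fun h => hA (Subtype.ext h)
      have : A.1.card < Fintype.card X := by
        have := Finset.card_lt_card (Finset.ssubset_univ_iff.2 hAuniv)
        simpa [Finset.card_univ] using this
      omega
  | succ n ih =>
    intro A hle
    by_cases hA : A = rootT hN hX
    · rw [hA]
    · obtain ⟨P, h1, h2⟩ := exists_par hN hX hA
      have hcard : A.1.card < P.1.card := Finset.card_lt_card h1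
      have hPle : Fintype.card X - P.1.card ≤ n := by
        have : P.1.card ≤ Fintype.card X := by
          simpa [Finset.card_univ] using Finset.card_le_card (Finset.subset_univ P.1)
        omega
      exact (ih P hPle).tail (par_edge hN hX h1 h2)

lemma leafT_inj (hN : IsPhyloNetwork N r lf) : Function.Injective (leafT hN) := by
  intro x y h
  have : ({x} : Finset X) = {y} := congrArg Subtype.val h
  exact Finset.singleton_injective this

lemma treeIsPhylo (hN : IsPhyloNetwork N r lf) (hX2 : 2 ≤ Fintype.card X) :
    haveI hX : Nonempty X := Fintype.card_pos_iff.1 (by omega)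
    IsPhyloTree (TreeD hN) (rootT hN hX) (leafT hN) := by
  have hX : Nonempty X := Fintype.card_pos_iff.1 (by omega)
  have huniv_ns : ∀ z : X, (Finset.univ : Finset X) ≠ {z} := by
    intro z h
    have := Finset.card_univ (α := X)
    rw [h] at this
    simp at this
    omega
  have hleaf_ne_root : ∀ x : X, leafT hN x ≠ rootT hN hX := by
    intro x h
    have : ({x} : Finset X) = Finset.univ := congrArg Subtype.val h
    exact huniv_ns x this.symm
  have hsingleton_of_not_leaf : ∀ A : Wt hN, ¬(∃ x, leafT hN x = A) → ∀ z, A.1 ≠ {z} := by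
    intro A hnl z hz
    exact hnl ⟨z, Subtype.ext hz.symm⟩
  constructor
  · constructor
    · exact acyclicT hN
    · exact leafT_inj hN
    · exact reachT hN hX
    · intro A
      constructor
      · rintro ⟨x, rfl⟩
        refine ⟨indegT_eq_one hN hX (hleaf_ne_root x), outdegT_singleton hN rfl⟩
      · rintro ⟨hin, hout⟩
        by_contra hnl
        have h2 := outdegT_ge_two hN (hsingleton_of_not_leaf A hnl)
        omega
    · -- root_out
      have := outdegT_ge_two hN (A := rootT hN hX) (fun z => huniv_ns z)
      exact this
    · exact indegT_root hN hX
    · intro A hroot hnl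
      left
      exact ⟨indegT_eq_one hN hX hroot, outdegT_ge_two hN (hsingleton_of_not_leaf A hnl)⟩
  · intro A
    by_cases hA : A = rootT hN hX
    · rw [hA, indegT_root hN hX]; omega
    · rw [indegT_eq_one hN hX hA]

end Stmt3Aux
namespace Stmt3Aux
open Digraph'

set_option linter.unusedSectionVars false
set_option linter.unusedVariables false
set_option maxHeartbeats 1000000

variable {X C V : Type} [Fintype X]
variable {N : Digraph' V} {r : V} {lf : X → V}

lemma exists_diff_index {f : V → C} (g : ℕ → V) (m : ℕ) (h : f (g m) ≠ f (g 0)) :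
    ∃ i < m, f (g (i + 1)) ≠ f (g i) := by
  induction m with
  | zero => exact absurd rfl h
  | succ m ih =>
    by_cases hm : f (g (m + 1)) = f (g m)
    · obtain ⟨i, hi, hd⟩ := ih (by rw [← hm]; exact h)
      exact ⟨i, by omega, hd⟩
    · exact ⟨m, by omega, hm⟩

lemma cover_unique (hN : IsPhyloNetwork N r lf) {A A' B : Wt hN}
    (h : (A, B) ∈ edgesT hN) (h' : (A', B) ∈ edgesT hN) : A = A' := by
  rw [mem_edgesT] at h h'
  rcases supersets_chain hN B.2.1 A A' h.1.subset h'.1.subset with hs | hs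
  · rcases eq_or_lt_of_le (Finset.le_iff_subset.2 hs) with heq | hlt
    · exact Subtype.ext heq
    · exact absurd ⟨h.1, hlt⟩ (h'.2 A)
  · rcases eq_or_lt_of_le (Finset.le_iff_subset.2 hs) with heq | hlt
    · exact Subtype.ext heq.symm
    · exact absurd ⟨h'.1, hlt⟩ (h.2 A')

/-- the crucial counting lemma: the cover tree does not cost more than N -/
lemma ch_le (hN : IsPhyloNetwork N r lf) (f : V → C) :
    ch (TreeD hN) (fun A : Wt hN => f (bot hN A.1)) ≤ ch N f := by
  classical
  set g : Wt hN → C := fun A => f (bot hN A.1) with hg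
  rw [Digraph'.ch, Digraph'.ch]
  set s := (TreeD hN).edges.filter (fun e => g e.1 ≠ g e.2) with hs
  set t := N.edges.filter (fun e => f e.1 ≠ f e.2) with ht
  -- main step : every bad tree edge yields a bad N-edge whose head has cluster e.2.1
  have hmap : ∀ e ∈ s, ∃ d, d ∈ t ∧ clu hN d.2 = e.2.1 := by
    rintro ⟨A, B⟩ he
    simp only [hs, Finset.mem_filter] at he
    obtain ⟨heT, hgd⟩ := he
    rw [show (TreeD hN).edges = edgesT hN from rfl, mem_edgesT] at heT
    obtain ⟨hBA, hcover⟩ := heT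
    set a := bot hN A.1 with ha
    set b := bot hN B.1 with hb
    have hcluA : clu hN a = A.1 := bot_clu hN A.2
    have hcluB : clu hN b = B.1 := bot_clu hN B.2
    -- a is an ancestor of b
    obtain ⟨x, hx⟩ := B.2.1
    have hanc : Anc hN a b := by
      have h1 : Anc hN a (lf x) := (mem_clu hN).1 (by rw [hcluA]; exact hBA.subset hx)
      have h2 : Anc hN b (lf x) := (mem_clu hN).1 (by rw [hcluB]; exact hx)
      rcases anc_comp hN h1 h2 with h | h
      · exact h
      · exfalso
        exact hBA.not_subset (hcluB ▸ hcluA ▸ clu_mono hN h)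
    have hex : ∃ n, (par hN)^[n] b = a := hanc
    set m := Nat.find hex with hm
    have hspec : (par hN)^[m] b = a := Nat.find_spec hex
    have hm1 : 1 ≤ m := by
      rcases Nat.eq_zero_or_pos m with h0 | h1
      · exfalso
        rw [h0] at hspec
        have hba : b = a := by rw [← hspec, Function.iterate_zero_apply]
        have : B.1 = A.1 := by rw [← hcluB, ← hcluA, hba]
        exact hBA.ne this
      · exact h1
    -- all strict intermediate iterates have cluster B.1
    have hheads : ∀ i < m, clu hN ((par hN)^[i] b) = B.1 := by
      intro i hi
      set c := (par hN)^[i] b with hc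
      have hBc : B.1 ⊆ clu hN c := by
        rw [← hcluB]
        exact clu_mono hN ⟨i, rfl⟩
      have hac : Anc hN a c := by
        refine ⟨m - i, ?_⟩
        rw [hc, ← Function.iterate_add_apply, Nat.sub_add_cancel hi.le, hspec]
      have hcA : clu hN c ⊆ A.1 := by
        rw [← hcluA]; exact clu_mono hN hac
      have hCl : Cl hN (clu hN c) := ⟨⟨x, hBc hx⟩, c, rfl⟩
      by_cases hcAeq : clu hN c = A.1
      · exfalso
        have h1 : Anc hN c a := bot_min hN A.2 hcAeq
        have : c = a := anc_antisymm hN h1 hac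
        exact Nat.find_min hex hi this
      · have hcss : clu hN c ⊂ A.1 := Finset.ssubset_iff_subset_ne.2 ⟨hcA, hcAeq⟩
        by_cases hBeq : B.1 = clu hN c
        · exact hBeq.symm
        · exfalso
          have hBss : B.1 ⊂ clu hN c := Finset.ssubset_iff_subset_ne.2 ⟨hBc, hBeq⟩
          exact hcover ⟨clu hN c, hCl⟩ ⟨hBss, hcss⟩
    -- find a differing consecutive pair
    have hdiff : f ((par hN)^[m] b) ≠ f ((par hN)^[0] b) := by
      rw [hspec, Function.iterate_zero_apply]
      exact hgd
    obtain ⟨i, hi, hd⟩ := exists_diff_index (fun n => (par hN)^[n] b) m hdiff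
    refine ⟨((par hN)^[i+1] b, (par hN)^[i] b), ?_, hheads i hi⟩
    have hir : (par hN)^[i] b ≠ r := by
      intro hreq
      have : clu hN ((par hN)^[i] b) = B.1 := hheads i hi
      rw [hreq, clu_root] at this
      rw [← this] at hBA
      exact hBA.not_subset (Finset.subset_univ _)
    have hmem : ((par hN)^[i+1] b, (par hN)^[i] b) ∈ N.edges := by
      rw [Function.iterate_succ_apply']
      exact par_mem hN hir
    simp only [ht, Finset.mem_filter]
    exact ⟨hmem, hd⟩
  -- build an injection
  set Q : Wt hN × Wt hN → Prop := fun e => ∃ d, d ∈ t ∧ clu hN d.2 = e.2.1 with hQ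
  set φ : Wt hN × Wt hN → V × V := fun e => if h : Q e then h.choose else (r, r) with hφ
  have hmaps : ∀ e ∈ s, φ e ∈ t := by
    intro e he
    have h := hmap e he
    rw [hφ]; simp only []
    rw [dif_pos h]
    exact h.choose_spec.1
  have hspecφ : ∀ e ∈ s, clu hN (φ e).2 = e.2.1 := by
    intro e he
    have h := hmap e he
    rw [hφ]; simp only []
    rw [dif_pos h]
    exact h.choose_spec.2
  have hinj : Set.InjOn φ s := by
    intro e he e' he' heq
    have h1 : e.2.1 = e'.2.1 := by
      rw [← hspecφ e he, ← hspecφ e' he', heq]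
    have h2 : e.2 = e'.2 := Subtype.ext h1
    have heT : e ∈ edgesT hN := (Finset.mem_filter.1 he).1
    have heT' : e' ∈ edgesT hN := (Finset.mem_filter.1 he').1
    have h3 : e.1 = e'.1 := by
      apply cover_unique hN (B := e.2)
      · exact (show ((e.1, e.2) : Wt hN × Wt hN) = e from rfl) ▸ heT
      · rw [h2]
        exact (show ((e'.1, e'.2) : Wt hN × Wt hN) = e' from rfl) ▸ heT'
    exact Prod.ext h3 h2
  exact Finset.card_le_card_of_injOn φ hmaps hinj

end Stmt3Aux
namespace Stmt3Aux
open Digraph'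

set_option linter.unusedSectionVars false
set_option linter.unusedVariables false
set_option maxHeartbeats 1000000

variable {X C V : Type} [Fintype X]
variable {N : Digraph' V} {r : V} {lf : X → V}

lemma key {k : ℕ} (S : Fin k → X → C) (hX2 : 2 ≤ Fintype.card X)
    (hN : IsPhyloNetwork N r lf) :
    ∃ (W : Type) (T : Digraph' W) (rootT' : W) (leafT' : X → W),
      IsPhyloTree T rootT' leafT' ∧ psHardSeq T leafT' S ≤ psHardSeq N lf S := by
  classical
  have hX : Nonempty X := Fintype.card_pos_iff.1 (by omega)
  refine ⟨Wt hN, TreeD hN, rootT hN hX, leafT hN, treeIsPhylo hN hX2, ?_⟩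
  rw [psHardSeq, psHardSeq]
  apply Finset.sum_le_sum
  intro i _
  set χ := S i with hχ
  have hne : {n | ∃ f : V → C, Extends lf χ f ∧ ch N f = n}.Nonempty := by
    refine ⟨_, (fun v => if h : ∃ x, lf x = v then χ h.choose
      else χ (Classical.arbitrary X)), ?_, rfl⟩
    intro x
    have hx : ∃ x', lf x' = lf x := ⟨x, rfl⟩
    simp only [dif_pos hx]
    congr 1
    exact hN.leaf_inj hx.choose_spec
  obtain ⟨f, hfext, hfch⟩ := Nat.sInf_mem hne
  have hgext : Extends (leafT hN) χ (fun A : Wt hN => f (bot hN A.1)) := by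
    intro x
    show f (bot hN ({x} : Finset X)) = χ x
    rw [bot_leaf hN x]
    exact hfext x
  calc psHard (TreeD hN) (leafT hN) χ
      ≤ ch (TreeD hN) (fun A : Wt hN => f (bot hN A.1)) := Nat.sInf_le ⟨_, hgext, rfl⟩
    _ ≤ ch N f := ch_le hN f
    _ = psHard N lf χ := hfch

end Stmt3Aux

namespace Stmt3Star
open Digraph'

set_option linter.unusedVariables false
set_option maxHeartbeats 1000000

variable (X : Type) [Fintype X]

noncomputable def starD : Digraph' (Option X) :=
  ⟨Finset.univ.image (fun x : X => ((none : Option X), some x))⟩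

variable {X}

lemma mem_starD {e : Option X × Option X} :
    e ∈ (starD X).edges ↔ ∃ x : X, e = (none, some x) := by
  constructor
  · intro h
    obtain ⟨x, _, hx⟩ := Finset.mem_image.1 h
    exact ⟨x, hx.symm⟩
  · rintro ⟨x, rfl⟩
    exact Finset.mem_image.2 ⟨x, Finset.mem_univ x, rfl⟩

lemma star_indeg_none : (starD X).indeg (none : Option X) = 0 := by
  rw [Digraph'.indeg, Finset.filter_congr_decidable, Finset.card_eq_zero,
    Finset.filter_eq_empty_iff]
  intro e he
  obtain ⟨x, rfl⟩ := mem_starD.1 he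
  simp

lemma star_indeg_some (x : X) : (starD X).indeg (some x) = 1 := by
  classical
  rw [Digraph'.indeg, Finset.filter_congr_decidable]
  have : ((starD X).edges.filter fun e => e.2 = some x) = {(none, some x)} := by
    ext e
    simp only [Finset.mem_filter, Finset.mem_singleton]
    constructor
    · rintro ⟨he, h2⟩
      obtain ⟨y, rfl⟩ := mem_starD.1 he
      simp at h2
      rw [h2]
    · rintro rfl
      exact ⟨mem_starD.2 ⟨x, rfl⟩, rfl⟩
  rw [this, Finset.card_singleton]

lemma star_outdeg_none : (starD X).outdeg (none : Option X) = Fintype.card X := by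
  classical
  rw [Digraph'.outdeg, Finset.filter_congr_decidable]
  have h1 : ((starD X).edges.filter fun e => e.1 = none) = (starD X).edges := by
    rw [Finset.filter_eq_self]
    intro e he
    obtain ⟨y, rfl⟩ := mem_starD.1 he
    rfl
  rw [h1, starD, Finset.card_image_of_injective _ (fun a b h => by
    simpa using h), Finset.card_univ]

lemma star_outdeg_some (x : X) : (starD X).outdeg (some x) = 0 := by
  rw [Digraph'.outdeg, Finset.filter_congr_decidable, Finset.card_eq_zero,
    Finset.filter_eq_empty_iff]
  intro e he
  obtain ⟨y, rfl⟩ := mem_starD.1 he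
  simp

lemma star_isTree (hX2 : 2 ≤ Fintype.card X) :
    IsPhyloTree (starD X) (none : Option X) (some : X → Option X) := by
  have hshape : ∀ {a b : Option X},
      Relation.TransGen (fun a b : Option X => (a, b) ∈ (starD X).edges) a b →
      a = none ∧ ∃ x, b = some x := by
    intro a b h
    induction h with
    | single he =>
      obtain ⟨x, hx⟩ := mem_starD.1 he
      exact ⟨congrArg Prod.fst hx, x, congrArg Prod.snd hx⟩
    | tail _ he ih =>
      obtain ⟨x, hx⟩ := mem_starD.1 he
      exact ⟨ih.1, x, congrArg Prod.snd hx⟩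
  constructor
  · constructor
    · intro v hv
      obtain ⟨h1, x, h2⟩ := hshape hv
      rw [h1] at h2
      exact absurd h2 (by simp)
    · intro x y h
      exact Option.some_injective X h
    · intro v
      match v with
      | none => exact Relation.ReflTransGen.refl
      | some x =>
        exact Relation.ReflTransGen.single (mem_starD.2 ⟨x, rfl⟩)
    · intro v
      match v with
      | none =>
        rw [star_indeg_none]
        constructor
        · rintro ⟨x, hx⟩; exact absurd hx (by simp)
        · rintro ⟨h, -⟩; omega
      | some x =>
        rw [star_indeg_some, star_outdeg_some]
        exact ⟨fun _ => ⟨rfl, rfl⟩, fun _ => ⟨x, rfl⟩⟩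
    · rw [star_outdeg_none]; exact hX2
    · exact star_indeg_none
    · intro v hv hl
      match v with
      | none => exact absurd rfl hv
      | some x => exact absurd ⟨x, rfl⟩ hl
  · intro v
    match v with
    | none => rw [star_indeg_none]; omega
    | some x => rw [star_indeg_some]

end Stmt3Star
/-- there is always a rooted phylogenetic tree that is a hardwired
    MP network. -/
theorem stmt3 {X C : Type} [Fintype X] (hX : 2 ≤ Fintype.card X)
    {k : ℕ} (S : Fin k → X → C) :
    ∃ (W : Type) (T : Digraph' W) (rootT : W) (leafT : X → W),
      IsPhyloTree T rootT leafT ∧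
      ∀ (V : Type) (N : Digraph' V) (rootN : V) (leafN : X → V),
        IsPhyloNetwork N rootN leafN → psHardSeq T leafT S ≤ psHardSeq N leafN S := by
  classical
  set A : Set ℕ := {n | ∃ (W : Type) (T : Digraph' W) (rootT : W) (leafT : X → W),
      IsPhyloTree T rootT leafT ∧ psHardSeq T leafT S = n} with hA
  have hAne : A.Nonempty :=
    ⟨_, Option X, Stmt3Star.starD X, none, some, Stmt3Star.star_isTree hX, rfl⟩
  obtain ⟨W, T, rt, ltf, hT, hval⟩ := Nat.sInf_mem hAne
  refine ⟨W, T, rt, ltf, hT, ?_⟩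
  intro V N rN lfN hNet
  obtain ⟨W', T', rt', ltf', hT', hle⟩ := Stmt3Aux.key S hX hNet
  have h2 : sInf A ≤ psHardSeq T' ltf' S := Nat.sInf_le ⟨W', T', rt', ltf', hT', rfl⟩
  rw [hval]
  exact le_trans h2 hle
end

section
/- Let S be a sequence of characters on X and let N be a rooted phylogenetic network on X achieving the minimum hardwired parsimony score among all rooted phylogenetic networks on X. Then every rooted phylogenetic tree on X displayed by N achieves the minimum (ordinary) parsimony score among all rooted phylogenetic trees on X; moreover PS_hard(S,N) = PS(S,T) for each such displayed tree T. -/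
open scoped Classical

open Digraph'

/-- Along a chain whose endpoints get different values of `f`,
    some consecutive pair changes. -/
lemma exists_change {V C : Type} (R : V → V → Prop) (f : V → C) :
    ∀ (l : List V) (a b : V), l.Chain' R → l.head? = some a → l.getLast? = some b →
      f a ≠ f b → ∃ p ∈ l.zip l.tail, R p.1 p.2 ∧ f p.1 ≠ f p.2
  | [], a, b, _, h1, _, _ => by simp at h1
  | [x], a, b, _, h1, h2, hne => by
      simp at h1 h2; subst h1; subst h2; exact absurd rfl hne
  | x :: y :: rest, a, b, hc, h1, h2, hne => by
      simp only [List.head?_cons, Option.some.injEq] at h1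
      subst h1
      replace hc : R x y ∧ List.Chain' R (y :: rest) := List.isChain_cons_cons.mp hc
      by_cases hxy : f x = f y
      · have h2' : (y :: rest).getLast? = some b := by
          rwa [List.getLast?_cons_cons] at h2
        obtain ⟨p, hp, hR, hf⟩ :=
          exists_change R f (y :: rest) y b hc.2 rfl h2' (hxy ▸ hne)
        exact ⟨p, List.mem_cons_of_mem _ hp, hR, hf⟩
      · exact ⟨(x, y), List.mem_cons_self, hc.1, hxy⟩

/-- Pulling back an assignment along a display does not increase the
    changing number. -/
lemma ch_le_of_displays {V W X C : Type} {N : Digraph' V} {leafN : X → V}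
    {T : Digraph' W} {leafT : X → W} (hD : Displays N leafN T leafT)
    (f : V → C) :
    ∃ g : W → C, (∀ x, g (leafT x) = f (leafN x)) ∧ T.ch g ≤ N.ch f := by
  obtain ⟨φ, hφinj, hφleaf, P, hP⟩ := hD
  refine ⟨f ∘ φ, fun x => by simp [hφleaf x], ?_⟩
  by_cases hV : Nonempty V
  · haveI : Nonempty (V × V) := ⟨(hV.some, hV.some)⟩
    set Q : W × W → V × V → Prop := fun e p =>
      p ∈ pathEdges (P e.1 e.2) ∧ p ∈ N.edges ∧ f p.1 ≠ f p.2 with hQ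
    set F : W × W → V × V := fun e =>
      if h : ∃ p, Q e p then h.choose else Classical.arbitrary _ with hF
    have hex : ∀ e ∈ T.edges.filter (fun e => (f ∘ φ) e.1 ≠ (f ∘ φ) e.2),
        ∃ p, Q e p := by
      intro e he
      rw [Finset.mem_filter] at he
      obtain ⟨hchain, hhead, hlast, _, _, _, _⟩ := hP e he.1
      obtain ⟨p, hp, hR, hf⟩ := exists_change (fun a b => (a, b) ∈ N.edges) f
        (P e.1 e.2) (φ e.1) (φ e.2) hchain hhead hlast he.2
      exact ⟨p, hp, by simpa using hR, hf⟩
    have hFQ : ∀ e ∈ T.edges.filter (fun e => (f ∘ φ) e.1 ≠ (f ∘ φ) e.2),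
        Q e (F e) := by
      intro e he
      have h := hex e he
      simp only [hF, dif_pos h]
      exact h.choose_spec
    show (T.edges.filter fun e => (f ∘ φ) e.1 ≠ (f ∘ φ) e.2).card ≤
      (N.edges.filter fun e => f e.1 ≠ f e.2).card
    refine Finset.card_le_card_of_injOn F (fun e he => ?_) ?_
    · obtain ⟨_, h1, h2⟩ := hFQ e he
      exact Finset.mem_filter.mpr ⟨h1, h2⟩
    · intro e he e' he' hFe
      by_contra hne
      have heT : e ∈ T.edges := (Finset.mem_filter.mp he).1
      have heT' : e' ∈ T.edges := (Finset.mem_filter.mp he').1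
      obtain ⟨_, _, _, _, _, _, hdisj⟩ := hP e heT
      have hnot := ((hdisj e' heT' hne).2) (F e) (hFQ e he).1
      exact hnot (hFe ▸ (hFQ e' he').1)
  · haveI : IsEmpty V := not_nonempty_iff.mp hV
    haveI : IsEmpty W := Function.isEmpty φ
    have : T.edges = ∅ := Finset.eq_empty_of_isEmpty _
    show (T.edges.filter _).card ≤ _
    simp [this]

/-- With a nonempty colour set and injective leaf map, extensions exist. -/
lemma exists_extension {V X C : Type} [Nonempty C] (leaf : X → V)
    (hinj : Function.Injective leaf) (χ : X → C) :
    ∃ f : V → C, Extends leaf χ f := by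
  refine ⟨fun v => if h : ∃ x, leaf x = v then χ h.choose else Classical.arbitrary C,
    fun x => ?_⟩
  have h : ∃ x', leaf x' = leaf x := ⟨x, rfl⟩
  simp only [dif_pos h]
  exact congrArg χ (hinj h.choose_spec)

lemma psHard_le_of_displays {V W X C : Type} [Nonempty C] {N : Digraph' V}
    {leafN : X → V} {T : Digraph' W} {leafT : X → W}
    (hinj : Function.Injective leafN) (hD : Displays N leafN T leafT) (χ : X → C) :
    psHard T leafT χ ≤ psHard N leafN χ := by
  obtain ⟨f0, hf0⟩ := exists_extension leafN hinj χ
  have hne : {n | ∃ f : V → C, Extends leafN χ f ∧ N.ch f = n}.Nonempty :=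
    ⟨N.ch f0, f0, hf0, rfl⟩
  obtain ⟨f, hf, hch⟩ := Nat.sInf_mem hne
  obtain ⟨g, hg, hle⟩ := ch_le_of_displays hD f
  have hgext : Extends leafT χ g := fun x => (hg x).trans (hf x)
  calc psHard T leafT χ ≤ T.ch g := Nat.sInf_le ⟨g, hgext, rfl⟩
    _ ≤ N.ch f := hle
    _ = psHard N leafN χ := hch

lemma psHard_eq_zero_of_isEmpty {V X C : Type} [IsEmpty C] (G : Digraph' V)
    (leaf : X → V) (χ : X → C) : psHard G leaf χ = 0 := by
  by_cases hV : Nonempty V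
  · have : {n | ∃ f : V → C, Extends leaf χ f ∧ G.ch f = n} = ∅ := by
      ext n
      simp only [Set.mem_setOf_eq, Set.mem_empty_iff_false, iff_false]
      rintro ⟨f, -, -⟩
      exact IsEmpty.false (f hV.some)
    rw [psHard, this, Nat.sInf_empty]
  · haveI : IsEmpty V := not_nonempty_iff.mp hV
    have hch : G.ch ((fun v => (IsEmpty.false v).elim : V → C)) = 0 := by
      rw [ch, Finset.eq_empty_of_isEmpty G.edges]
      simp
    have : psHard G leaf χ ≤ 0 :=
      Nat.sInf_le ⟨(fun v => (IsEmpty.false v).elim : V → C), fun x => (IsEmpty.false (χ x)).elim, hch⟩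
    omega

/-- every tree displayed by a hardwired MP network is an MP tree,
    and realizes the score of the network. -/
theorem stmt4 {V W X C : Type} {k : ℕ} (S : Fin k → X → C)
    (N : Digraph' V) (rootN : V) (leafN : X → V) (hN : IsPhyloNetwork N rootN leafN)
    (hopt : ∀ (V' : Type) (N' : Digraph' V') (rootN' : V') (leafN' : X → V'),
      IsPhyloNetwork N' rootN' leafN' → psHardSeq N leafN S ≤ psHardSeq N' leafN' S)
    (T : Digraph' W) (rootT : W) (leafT : X → W)
    (hT : IsPhyloTree T rootT leafT) (hD : Displays N leafN T leafT) :
    (∀ (W' : Type) (T' : Digraph' W') (rootT' : W') (leafT' : X → W'),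
      IsPhyloTree T' rootT' leafT' → psHardSeq T leafT S ≤ psHardSeq T' leafT' S) ∧
    psHardSeq N leafN S = psHardSeq T leafT S := by
  by_cases hC : Nonempty C
  · haveI := hC
    have key : psHardSeq T leafT S ≤ psHardSeq N leafN S :=
      Finset.sum_le_sum fun i _ =>
        psHard_le_of_displays hN.leaf_inj hD (S i)
    have h1 : psHardSeq N leafN S ≤ psHardSeq T leafT S :=
      hopt W T rootT leafT hT.1
    have heq : psHardSeq N leafN S = psHardSeq T leafT S := le_antisymm h1 key
    exact ⟨fun W' T' rootT' leafT' hT' =>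
      heq ▸ hopt W' T' rootT' leafT' hT'.1, heq⟩
  · haveI : IsEmpty C := not_nonempty_iff.mp hC
    have hz : ∀ {V' : Type} (G : Digraph' V') (leaf : X → V'),
        psHardSeq G leaf S = 0 := fun G leaf =>
      Finset.sum_eq_zero fun i _ => psHard_eq_zero_of_isEmpty G leaf (S i)
    refine ⟨fun W' T' rootT' leafT' _ => ?_, ?_⟩
    · rw [hz T leafT, hz T' leafT']
    · rw [hz N leafN, hz T leafT]
end

section
/- Let N be a hardwired maximum parsimony network for a sequence S = (χ₁,…,χ_k) of characters on X, and suppose N has a reticulation v. Let χ̄₁,…,χ̄_k be extensions of χ₁,…,χ_k to V(N) that collectively realize PS_hard(S,N). Then for every i and every parent p of v, χ̄ᵢ(p) = χ̄ᵢ(v). -/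
open scoped Classical

open Digraph'
namespace Stmt11
open Relation Digraph'

variable {V X C : Type}

theorem indeg_pos {G : Digraph' V} {u w : V} (h : (w, u) ∈ G.edges) : 1 ≤ G.indeg u :=
  Finset.card_pos.mpr ⟨(w, u), Finset.mem_filter.mpr ⟨h, rfl⟩⟩

theorem outdeg_pos {G : Digraph' V} {u w : V} (h : (u, w) ∈ G.edges) : 1 ≤ G.outdeg u :=
  Finset.card_pos.mpr ⟨(u, w), Finset.mem_filter.mpr ⟨h, rfl⟩⟩

theorem exists_out_edge {G : Digraph' V} {u : V} (h : 1 ≤ G.outdeg u) :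
    ∃ w, (u, w) ∈ G.edges := by
  obtain ⟨⟨a, b⟩, hm⟩ := Finset.card_pos.mp h
  simp only [Finset.mem_filter] at hm
  exact ⟨b, by rw [← hm.2]; exact hm.1⟩

theorem exists_in_edge' {G : Digraph' V} {u : V} (h : 1 ≤ G.indeg u) :
    ∃ w, (w, u) ∈ G.edges := by
  obtain ⟨⟨a, b⟩, hm⟩ := Finset.card_pos.mp h
  simp only [Finset.mem_filter] at hm
  exact ⟨a, by rw [← hm.2]; exact hm.1⟩

theorem in_unique {G : Digraph' V} {u a b : V} (h : G.indeg u ≤ 1)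
    (ha : (a, u) ∈ G.edges) (hb : (b, u) ∈ G.edges) : a = b := by
  have := Finset.card_le_one.mp h (a, u) (Finset.mem_filter.mpr ⟨ha, rfl⟩)
    (b, u) (Finset.mem_filter.mpr ⟨hb, rfl⟩)
  exact congrArg Prod.fst this

theorem out_unique {G : Digraph' V} {u a b : V} (h : G.outdeg u ≤ 1)
    (ha : (u, a) ∈ G.edges) (hb : (u, b) ∈ G.edges) : a = b := by
  have := Finset.card_le_one.mp h (u, a) (Finset.mem_filter.mpr ⟨ha, rfl⟩)
    (u, b) (Finset.mem_filter.mpr ⟨hb, rfl⟩)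
  exact congrArg Prod.snd this

theorem exists_other_in {G : Digraph' V} {u : V} (p : V) (h : 2 ≤ G.indeg u) :
    ∃ q, (q, u) ∈ G.edges ∧ q ≠ p := by
  obtain ⟨e1, he1, e2, he2, hne⟩ := Finset.one_lt_card.mp h
  simp only [Finset.mem_filter] at he1 he2
  have h1 : (e1.1, u) ∈ G.edges := by rw [← he1.2]; exact he1.1
  have h2 : (e2.1, u) ∈ G.edges := by rw [← he2.2]; exact he2.1
  by_cases hq : e1.1 = p
  · refine ⟨e2.1, h2, fun hp => hne ?_⟩
    have : e1.1 = e2.1 := by rw [hq, hp]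
    calc e1 = (e1.1, e1.2) := rfl
    _ = (e2.1, e2.2) := by rw [this, he1.2, he2.2]
    _ = e2 := rfl
  · exact ⟨e1.1, h1, hq⟩

theorem indeg_mono {G H : Digraph' V} (hsub : G.edges ⊆ H.edges) (u : V) :
    G.indeg u ≤ H.indeg u :=
  Finset.card_le_card (Finset.filter_subset_filter _ hsub)

theorem outdeg_mono {G H : Digraph' V} (hsub : G.edges ⊆ H.edges) (u : V) :
    G.outdeg u ≤ H.outdeg u :=
  Finset.card_le_card (Finset.filter_subset_filter _ hsub)

theorem ch_mono {G H : Digraph' V} (hsub : G.edges ⊆ H.edges) (f : V → C) :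
    ch G f ≤ ch H f :=
  Finset.card_le_card (Finset.filter_subset_filter _ hsub)

theorem acyclic_mono {G H : Digraph' V} (hsub : G.edges ⊆ H.edges) (h : H.Acyclic) :
    G.Acyclic :=
  fun v hv => h v (TransGen.mono (fun _ _ hab => hsub hab) _ _ hv)

theorem finite_of_reach (G : Digraph' V) (root : V)
    (h : ∀ v : V, Relation.ReflTransGen (fun a b => (a, b) ∈ G.edges) root v) :
    Finite V := by
  have hsub : (Set.univ : Set V) ⊆ ↑(insert root (G.edges.image Prod.snd)) := by
    intro v _
    rcases (h v).cases_tail with h1 | ⟨c, _, hc⟩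
    · subst h1; simp
    · simp only [Finset.coe_insert, Set.mem_insert_iff, Finset.coe_image, Set.mem_image]
      exact Or.inr ⟨(c, v), hc, rfl⟩
  exact Set.finite_univ_iff.mp
    (Set.Finite.subset (insert root (G.edges.image Prod.snd)).finite_toSet hsub)

theorem wf_transGen (G : Digraph' V) [Finite V] (hac : G.Acyclic) :
    WellFounded (fun a b : V => Relation.TransGen (fun a b => (a, b) ∈ G.edges) a b) := by
  haveI : IsTrans V (fun a b : V => Relation.TransGen (fun a b => (a, b) ∈ G.edges) a b) :=
    ⟨fun _ _ _ => TransGen.trans⟩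
  haveI : IsIrrefl V (fun a b : V => Relation.TransGen (fun a b => (a, b) ∈ G.edges) a b) :=
    ⟨hac⟩
  exact Finite.wellFounded_of_trans_of_irrefl _

theorem wf_transGenRev (G : Digraph' V) [Finite V] (hac : G.Acyclic) :
    WellFounded (fun a b : V => Relation.TransGen (fun a b => (b, a) ∈ G.edges) a b) := by
  haveI : IsTrans V (fun a b : V => Relation.TransGen (fun a b => (b, a) ∈ G.edges) a b) :=
    ⟨fun _ _ _ => TransGen.trans⟩
  have key : ∀ a b : V, Relation.TransGen (fun a b => (b, a) ∈ G.edges) a b →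
      Relation.TransGen (fun a b => (a, b) ∈ G.edges) b a := by
    intro a b h
    induction h with
    | single h => exact TransGen.single h
    | tail _ h ih => exact TransGen.head h ih
  haveI : IsIrrefl V (fun a b : V => Relation.TransGen (fun a b => (b, a) ∈ G.edges) a b) :=
    ⟨fun a ha => hac a (key a a ha)⟩
  exact Finite.wellFounded_of_trans_of_irrefl _

theorem transGen_transGen {α : Type*} {r : α → α → Prop} {a b : α}
    (h : Relation.TransGen (Relation.TransGen r) a b) : Relation.TransGen r a b := by
  induction h with
  | single h => exact h
  | tail _ h ih => exact ih.trans h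

theorem exists_in_edge {G : Digraph' V} {root u : V}
    (h : Relation.ReflTransGen (fun a b => (a, b) ∈ G.edges) root u) (hu : u ≠ root) :
    ∃ w, (w, u) ∈ G.edges := by
  rcases h.cases_tail with h1 | ⟨c, _, hc⟩
  · exact absurd h1 hu
  · exact ⟨c, hc⟩

/-- the invariant maintained during tidying -/
structure Inv (G : Digraph' V) (root : V) (leaf : X → V) : Prop where
  acyclic : G.Acyclic
  leaf_inj : Function.Injective leaf
  reach : ∀ v : V, Relation.ReflTransGen (fun a b => (a, b) ∈ G.edges) root v
  leaf_in : ∀ x, G.indeg (leaf x) = 1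
  leaf_out : ∀ x, G.outdeg (leaf x) = 0
  root_in : G.indeg root = 0
  thin : ∀ v, 2 ≤ G.indeg v → G.outdeg v ≤ 1

end Stmt11
namespace Stmt11
open Relation Digraph'

variable {V X C : Type}

/-- map into the subtype avoiding `v₀`, sending `v₀` to junk `w` -/
noncomputable def emb (v₀ : V) (w : {u : V // u ≠ v₀}) (u : V) : {u : V // u ≠ v₀} :=
  if h : u = v₀ then w else ⟨u, h⟩

theorem emb_ne {v₀ : V} (w : {u : V // u ≠ v₀}) {u : V} (h : u ≠ v₀) :
    emb v₀ w u = ⟨u, h⟩ := dif_neg h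

/-- edges of `G` avoiding `v₀`, transported to the subtype -/
noncomputable def restrictEdges (G : Digraph' V) (v₀ : V) (w : {u : V // u ≠ v₀}) :
    Finset ({u : V // u ≠ v₀} × {u : V // u ≠ v₀}) :=
  (G.edges.filter fun e => e.1 ≠ v₀ ∧ e.2 ≠ v₀).image fun e => (emb v₀ w e.1, emb v₀ w e.2)

theorem mem_restrictEdges {G : Digraph' V} {v₀ : V} {w : {u : V // u ≠ v₀}}
    (a b : {u : V // u ≠ v₀}) :
    (a, b) ∈ restrictEdges G v₀ w ↔ (a.1, b.1) ∈ G.edges := by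
  constructor
  · intro h
    simp only [restrictEdges, Finset.mem_image, Finset.mem_filter] at h
    obtain ⟨e, ⟨he, h1, h2⟩, heq⟩ := h
    rw [emb_ne w h1, emb_ne w h2] at heq
    obtain ⟨ha, hb⟩ := Prod.mk.injEq _ _ _ _ ▸ heq
    rw [← Subtype.ext_iff.mp ha, ← Subtype.ext_iff.mp hb]
    simpa using he
  · intro h
    simp only [restrictEdges, Finset.mem_image, Finset.mem_filter]
    exact ⟨(a.1, b.1), ⟨h, a.2, b.2⟩, by rw [emb_ne w a.2, emb_ne w b.2]⟩

theorem card_restrict_filter (G : Digraph' V) (v₀ : V) (w : {u : V // u ≠ v₀})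
    (P : {u : V // u ≠ v₀} × {u : V // u ≠ v₀} → Prop) (Q : V × V → Prop)
    (hPQ : ∀ (a b : V) (h1 : a ≠ v₀) (h2 : b ≠ v₀), (a, b) ∈ G.edges →
      (P (⟨a, h1⟩, ⟨b, h2⟩) ↔ Q (a, b))) :
    ((restrictEdges G v₀ w).filter P).card
      = (G.edges.filter fun e => Q e ∧ e.1 ≠ v₀ ∧ e.2 ≠ v₀).card := by
  apply Finset.card_bij (fun p _ => ((p.1.1 : V), (p.2.1 : V)))
  · rintro ⟨a, b⟩ ha
    simp only [Finset.mem_filter] at ha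
    have hmem := (mem_restrictEdges a b).mp ha.1
    refine Finset.mem_filter.mpr ⟨hmem, ?_, a.2, b.2⟩
    exact (hPQ a.1 b.1 a.2 b.2 hmem).mp (by simpa using ha.2)
  · rintro ⟨a₁, b₁⟩ _ ⟨a₂, b₂⟩ _ h
    obtain ⟨h1, h2⟩ := Prod.mk.injEq _ _ _ _ ▸ h
    simp only [Prod.mk.injEq]
    exact ⟨Subtype.ext h1, Subtype.ext h2⟩
  · rintro ⟨a, b⟩ hab
    simp only [Finset.mem_filter] at hab
    obtain ⟨hmem, hQ, h1, h2⟩ := hab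
    refine ⟨(⟨a, h1⟩, ⟨b, h2⟩), ?_, rfl⟩
    refine Finset.mem_filter.mpr ⟨(mem_restrictEdges _ _).mpr hmem, ?_⟩
    exact (hPQ a b h1 h2 hmem).mpr hQ

theorem indeg_restrict (G : Digraph' V) (v₀ : V) (w : {u : V // u ≠ v₀})
    (u : {u : V // u ≠ v₀}) :
    Digraph'.indeg ⟨restrictEdges G v₀ w⟩ u
      = (G.edges.filter fun e => e.2 = u.1 ∧ e.1 ≠ v₀).card := by
  unfold Digraph'.indeg
  rw [card_restrict_filter G v₀ w _ (fun e => e.2 = u.1)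
    (fun a b h1 h2 _ => ⟨fun h => Subtype.ext_iff.mp h, fun h => Subtype.ext h⟩)]
  exact congrArg Finset.card (Finset.filter_congr (fun e _ => by
    constructor
    · rintro ⟨h, h1, _⟩; exact ⟨h, h1⟩
    · rintro ⟨h, h1⟩; exact ⟨h, h1, h ▸ u.2⟩))

theorem outdeg_restrict (G : Digraph' V) (v₀ : V) (w : {u : V // u ≠ v₀})
    (u : {u : V // u ≠ v₀}) :
    Digraph'.outdeg ⟨restrictEdges G v₀ w⟩ u
      = (G.edges.filter fun e => e.1 = u.1 ∧ e.2 ≠ v₀).card := by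
  unfold Digraph'.outdeg
  rw [card_restrict_filter G v₀ w _ (fun e => e.1 = u.1)
    (fun a b h1 h2 _ => ⟨fun h => Subtype.ext_iff.mp h, fun h => Subtype.ext h⟩)]
  exact congrArg Finset.card (Finset.filter_congr (fun e _ => by
    constructor
    · rintro ⟨h, _, h2⟩; exact ⟨h, h2⟩
    · rintro ⟨h, h2⟩; exact ⟨h, h ▸ u.2, h2⟩))

theorem ch_restrict_le (G : Digraph' V) (v₀ : V) (w : {u : V // u ≠ v₀}) (f : V → C) :
    ch ⟨restrictEdges G v₀ w⟩ (fun u => f u.1) ≤ ch G f := by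
  unfold ch
  apply Finset.card_le_card_of_injOn (fun p => ((p.1.1 : V), (p.2.1 : V)))
  · rintro ⟨a, b⟩ hab
    simp only [Finset.mem_coe, Finset.mem_filter] at hab ⊢
    exact ⟨(mem_restrictEdges a b).mp hab.1, hab.2⟩
  · rintro ⟨a₁, b₁⟩ _ ⟨a₂, b₂⟩ _ h
    obtain ⟨h1, h2⟩ := Prod.mk.injEq _ _ _ _ ▸ h
    simp only [Prod.mk.injEq]
    exact ⟨Subtype.ext h1, Subtype.ext h2⟩

theorem acyclic_restrict (G : Digraph' V) (v₀ : V) (w : {u : V // u ≠ v₀})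
    (hac : G.Acyclic) : Digraph'.Acyclic ⟨restrictEdges G v₀ w⟩ := by
  intro u hu
  apply hac u.1
  exact hu.lift Subtype.val (fun a b hab => (mem_restrictEdges a b).mp hab)

theorem indeg_insert_ne {W : Type} [DecidableEq W] (E : Finset (W × W)) (e : W × W) (t : W)
    (h : ¬ e.2 = t) :
    Digraph'.indeg ⟨insert e E⟩ t = Digraph'.indeg ⟨E⟩ t := by
  unfold Digraph'.indeg
  simp only [Finset.filter_insert]
  rw [if_neg h]

theorem outdeg_insert_ne {W : Type} [DecidableEq W] (E : Finset (W × W)) (e : W × W) (s : W)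
    (h : ¬ e.1 = s) :
    Digraph'.outdeg ⟨insert e E⟩ s = Digraph'.outdeg ⟨E⟩ s := by
  unfold Digraph'.outdeg
  simp only [Finset.filter_insert]
  rw [if_neg h]

theorem indeg_insert_le {W : Type} [DecidableEq W] (E : Finset (W × W)) (e : W × W) (t : W) :
    Digraph'.indeg ⟨insert e E⟩ t ≤ Digraph'.indeg ⟨E⟩ t + 1 := by
  unfold Digraph'.indeg
  simp only [Finset.filter_insert]
  split_ifs with h
  · exact Finset.card_insert_le _ _
  · exact Nat.le_succ _

theorem outdeg_insert_le {W : Type} [DecidableEq W] (E : Finset (W × W)) (e : W × W) (s : W) :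
    Digraph'.outdeg ⟨insert e E⟩ s ≤ Digraph'.outdeg ⟨E⟩ s + 1 := by
  unfold Digraph'.outdeg
  simp only [Finset.filter_insert]
  split_ifs with h
  · exact Finset.card_insert_le _ _
  · exact Nat.le_succ _

theorem card_restrict_le (G : Digraph' V) (v₀ : V) (w : {u : V // u ≠ v₀}) :
    (restrictEdges G v₀ w).card ≤ (G.edges.filter fun e => e.1 ≠ v₀ ∧ e.2 ≠ v₀).card :=
  Finset.card_image_le

end Stmt11
namespace Stmt11
open Relation Digraph'

variable {V X C : Type}

/-- score comparison: every extension on `G` induces one on `G'` of no larger cost -/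
def Transfer (C : Type) {V V' : Type} (G : Digraph' V) (leaf : X → V)
    (G' : Digraph' V') (leaf' : X → V') : Prop :=
  ∀ (χ : X → C) (f : V → C), Extends leaf χ f →
    ∃ f' : V' → C, Extends leaf' χ f' ∧ ch G' f' ≤ ch G f

theorem Transfer.comp {V' V'' : Type} {G : Digraph' V} {leaf : X → V}
    {G' : Digraph' V'} {leaf' : X → V'} {G'' : Digraph' V''} {leaf'' : X → V''}
    (h1 : Transfer C G leaf G' leaf') (h2 : Transfer C G' leaf' G'' leaf'') :
    Transfer C G leaf G'' leaf'' := by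
  intro χ f hf
  obtain ⟨f', hf', hc'⟩ := h1 χ f hf
  obtain ⟨f'', hf'', hc''⟩ := h2 χ f' hf'
  exact ⟨f'', hf'', hc''.trans hc'⟩

theorem step_delete (G : Digraph' V) (root : V) (leaf : X → V) (inv : Inv G root leaf)
    (v₀ : V) (h0 : v₀ ≠ root) (hnl : ¬∃ x, leaf x = v₀) (hout : G.outdeg v₀ = 0) :
    ∃ (G' : Digraph' {u : V // u ≠ v₀}) (root' : {u : V // u ≠ v₀})
      (leaf' : X → {u : V // u ≠ v₀}),
      Inv G' root' leaf' ∧ G'.edges.card < G.edges.card ∧ Transfer C G leaf G' leaf' := by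
  have hr : root ≠ v₀ := Ne.symm h0
  set root' : {u : V // u ≠ v₀} := ⟨root, hr⟩ with hroot'
  set G' : Digraph' {u : V // u ≠ v₀} := ⟨restrictEdges G v₀ root'⟩ with hG'
  set leaf' : X → {u : V // u ≠ v₀} := fun x => ⟨leaf x, fun h => hnl ⟨x, h⟩⟩ with hleaf'
  have hno1 : ∀ e ∈ G.edges, e.1 ≠ v₀ := by
    intro e he h1
    have : (v₀, e.2) ∈ G.edges := by rw [← h1]; simpa using he
    have := outdeg_pos this
    omega
  have hdeg_in : ∀ u : {u : V // u ≠ v₀}, G'.indeg u = G.indeg u.1 := by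
    intro u
    rw [hG', indeg_restrict]
    unfold Digraph'.indeg
    exact congrArg Finset.card (Finset.filter_congr (fun e he =>
      and_iff_left (hno1 e he)))
  have hdeg_out : ∀ u : {u : V // u ≠ v₀}, G'.outdeg u ≤ G.outdeg u.1 := by
    intro u
    rw [hG', outdeg_restrict]
    unfold Digraph'.outdeg
    apply Finset.card_le_card
    intro e he
    simp only [Finset.mem_filter] at he ⊢
    exact ⟨he.1, he.2.1⟩
  haveI : Finite V := finite_of_reach G root inv.reach
  have wf := wf_transGen G inv.acyclic
  have key : ∀ u : V, ∀ hu : u ≠ v₀,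
      Relation.ReflTransGen (fun a b => (a, b) ∈ G'.edges) root' ⟨u, hu⟩ := by
    intro u
    refine WellFounded.induction wf
      (C := fun u => ∀ hu : u ≠ v₀,
        Relation.ReflTransGen (fun a b => (a, b) ∈ G'.edges) root' ⟨u, hu⟩) u ?_
    intro x IH hx
    by_cases hxr : x = root
    · subst hxr; exact ReflTransGen.refl
    · obtain ⟨w', hw⟩ := exists_in_edge (inv.reach x) hxr
      have hwv : w' ≠ v₀ := by
        intro h; subst h
        have := outdeg_pos hw
        omega
      exact (IH w' (TransGen.single hw) hwv).tail ((mem_restrictEdges _ _).mpr hw)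
  refine ⟨G', root', leaf', ?_, ?_, ?_⟩
  · refine ⟨acyclic_restrict G v₀ root' inv.acyclic, ?_, ?_, ?_, ?_, ?_, ?_⟩
    · intro x y h
      exact inv.leaf_inj (congrArg Subtype.val h)
    · rintro ⟨u, hu⟩
      exact key u hu
    · intro x
      exact (hdeg_in (leaf' x)).trans (inv.leaf_in x)
    · intro x
      exact Nat.le_zero.mp ((hdeg_out (leaf' x)).trans (le_of_eq (inv.leaf_out x)))
    · exact (hdeg_in root').trans inv.root_in
    · intro u h2
      refine (hdeg_out u).trans (inv.thin u.1 ?_)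
      rw [← hdeg_in u]; exact h2
  · obtain ⟨w', hw⟩ := exists_in_edge (inv.reach v₀) h0
    refine lt_of_le_of_lt (card_restrict_le G v₀ root') (Finset.card_lt_card ?_)
    rw [Finset.ssubset_iff_of_subset (Finset.filter_subset _ _)]
    exact ⟨(w', v₀), hw, by simp⟩
  · intro χ f hf
    exact ⟨fun u => f u.1, fun x => hf x, ch_restrict_le G v₀ root' f⟩

end Stmt11
namespace Stmt11
open Relation Digraph'

variable {V X C : Type}

theorem step_suppress (G : Digraph' V) (root : V) (leaf : X → V) (inv : Inv G root leaf)
    (v₀ : V) (h0 : v₀ ≠ root) (hnl : ¬∃ x, leaf x = v₀)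
    (hin : G.indeg v₀ = 1) (hout : G.outdeg v₀ = 1) :
    ∃ (G' : Digraph' {u : V // u ≠ v₀}) (root' : {u : V // u ≠ v₀})
      (leaf' : X → {u : V // u ≠ v₀}),
      Inv G' root' leaf' ∧ G'.edges.card < G.edges.card ∧ Transfer C G leaf G' leaf' := by
  obtain ⟨a₀, hva⟩ := exists_in_edge' (le_of_eq hin.symm)
  obtain ⟨b₀, hvb⟩ := exists_out_edge (le_of_eq hout.symm)
  have ha₀ : a₀ ≠ v₀ := by
    intro h
    rw [h] at hva
    exact inv.acyclic v₀ (TransGen.single hva)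
  have hb₀ : b₀ ≠ v₀ := by
    intro h
    rw [h] at hvb
    exact inv.acyclic v₀ (TransGen.single hvb)
  have hab : a₀ ≠ b₀ := by
    intro h
    rw [h] at hva
    exact inv.acyclic b₀ (TransGen.head hva (TransGen.single hvb))
  have in_uniq : ∀ w, (w, v₀) ∈ G.edges → w = a₀ :=
    fun w h => in_unique (le_of_eq hin) h hva
  have out_uniq : ∀ w, (v₀, w) ∈ G.edges → w = b₀ :=
    fun w h => out_unique (le_of_eq hout) h hvb
  have hr : root ≠ v₀ := Ne.symm h0
  set root' : {u : V // u ≠ v₀} := ⟨root, hr⟩ with hroot'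
  set πa : {u : V // u ≠ v₀} := ⟨a₀, ha₀⟩ with hπa
  set πb : {u : V // u ≠ v₀} := ⟨b₀, hb₀⟩ with hπb
  set S₀ := restrictEdges G v₀ root' with hS₀def
  set G' : Digraph' {u : V // u ≠ v₀} := ⟨insert (πa, πb) S₀⟩ with hG'
  set leaf' : X → {u : V // u ≠ v₀} := fun x => ⟨leaf x, fun h => hnl ⟨x, h⟩⟩ with hleaf'
  have hπab : πa ≠ πb := fun h => hab (congrArg Subtype.val h)
  have hπbv : ((πb : {u : V // u ≠ v₀}) : V) = b₀ := rfl
  have hπav : ((πa : {u : V // u ≠ v₀}) : V) = a₀ := rfl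
  have hmem' : ∀ s t : {u : V // u ≠ v₀}, (s, t) ∈ G'.edges ↔
      ((s = πa ∧ t = πb) ∨ (s.1, t.1) ∈ G.edges) := by
    intro s t
    rw [hG']
    show (s, t) ∈ insert (πa, πb) S₀ ↔ _
    rw [Finset.mem_insert, Prod.mk.injEq, hS₀def, mem_restrictEdges]
  -- in/out degree bookkeeping
  have hS₀in : ∀ t : {u : V // u ≠ v₀}, Digraph'.indeg ⟨S₀⟩ t
      = (G.edges.filter fun e => e.2 = t.1 ∧ e.1 ≠ v₀).card := by
    intro t; rw [hS₀def]; exact indeg_restrict G v₀ root' t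
  have hS₀out : ∀ s : {u : V // u ≠ v₀}, Digraph'.outdeg ⟨S₀⟩ s
      = (G.edges.filter fun e => e.1 = s.1 ∧ e.2 ≠ v₀).card := by
    intro s; rw [hS₀def]; exact outdeg_restrict G v₀ root' s
  have hsplit_b : (G.edges.filter fun e => e.2 = b₀ ∧ e.1 ≠ v₀).card + 1 = G.indeg b₀ := by
    have h1 := Finset.card_filter_add_card_filter_not
      (s := G.edges.filter (fun e => e.2 = b₀)) (p := fun e => e.1 = v₀)
    rw [Finset.filter_filter, Finset.filter_filter] at h1
    have h2 : G.edges.filter (fun e => e.2 = b₀ ∧ e.1 = v₀) = {(v₀, b₀)} := by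
      apply Finset.eq_singleton_iff_unique_mem.mpr
      refine ⟨Finset.mem_filter.mpr ⟨hvb, rfl, rfl⟩, ?_⟩
      rintro ⟨x, y⟩ hm
      simp only [Finset.mem_filter] at hm
      obtain ⟨-, h4, h3⟩ := hm
      simp [h3, h4]
    rw [h2, Finset.card_singleton] at h1
    rw [show G.indeg b₀ = (G.edges.filter fun e => e.2 = b₀).card from rfl, ← h1]
    have h5 : (G.edges.filter fun e => e.2 = b₀ ∧ e.1 ≠ v₀)
        = (G.edges.filter fun e => e.2 = b₀ ∧ ¬ e.1 = v₀) :=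
      Finset.filter_congr (fun e _ => Iff.rfl)
    rw [h5]
    omega
  have hsplit_a : (G.edges.filter fun e => e.1 = a₀ ∧ e.2 ≠ v₀).card + 1 = G.outdeg a₀ := by
    have h1 := Finset.card_filter_add_card_filter_not
      (s := G.edges.filter (fun e => e.1 = a₀)) (p := fun e => e.2 = v₀)
    rw [Finset.filter_filter, Finset.filter_filter] at h1
    have h2 : G.edges.filter (fun e => e.1 = a₀ ∧ e.2 = v₀) = {(a₀, v₀)} := by
      apply Finset.eq_singleton_iff_unique_mem.mpr
      refine ⟨Finset.mem_filter.mpr ⟨hva, rfl, rfl⟩, ?_⟩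
      rintro ⟨x, y⟩ hm
      simp only [Finset.mem_filter] at hm
      obtain ⟨-, h3, h4⟩ := hm
      simp [h3, h4]
    rw [h2, Finset.card_singleton] at h1
    rw [show G.outdeg a₀ = (G.edges.filter fun e => e.1 = a₀).card from rfl, ← h1]
    have h5 : (G.edges.filter fun e => e.1 = a₀ ∧ e.2 ≠ v₀)
        = (G.edges.filter fun e => e.1 = a₀ ∧ ¬ e.2 = v₀) :=
      Finset.filter_congr (fun e _ => Iff.rfl)
    rw [h5]
    omega
  have hin_ne : ∀ t : {u : V // u ≠ v₀}, t ≠ πb → G'.indeg t = G.indeg t.1 := by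
    intro t ht
    have h1 : G'.indeg t = Digraph'.indeg ⟨S₀⟩ t := by
      rw [hG']
      exact indeg_insert_ne S₀ (πa, πb) t (fun h => ht h.symm)
    rw [h1, hS₀in]
    unfold Digraph'.indeg
    refine congrArg Finset.card (Finset.filter_congr (fun e he => ?_))
    refine ⟨fun h => h.1, fun h => ⟨h, fun h1 => ?_⟩⟩
    have hm : (v₀, e.2) ∈ G.edges := by rw [← h1]; simpa using he
    exact ht (Subtype.ext (h ▸ out_uniq e.2 hm))
  have hout_ne : ∀ s : {u : V // u ≠ v₀}, s ≠ πa → G'.outdeg s = G.outdeg s.1 := by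
    intro s hs
    have h1 : G'.outdeg s = Digraph'.outdeg ⟨S₀⟩ s := by
      rw [hG']
      exact outdeg_insert_ne S₀ (πa, πb) s (fun h => hs h.symm)
    rw [h1, hS₀out]
    unfold Digraph'.outdeg
    refine congrArg Finset.card (Finset.filter_congr (fun e he => ?_))
    refine ⟨fun h => h.1, fun h => ⟨h, fun h2 => ?_⟩⟩
    have hm : (e.1, v₀) ∈ G.edges := by rw [← h2]; simpa using he
    exact hs (Subtype.ext (h ▸ in_uniq e.1 hm))
  have hnewmem : (πa, πb) ∈ G'.edges := by
    rw [hG']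
    exact Finset.mem_insert_self _ _
  have hin_b : G'.indeg πb ≤ G.indeg b₀ := by
    have h1 : G'.indeg πb ≤ Digraph'.indeg ⟨S₀⟩ πb + 1 := by
      rw [hG']
      exact indeg_insert_le S₀ (πa, πb) πb
    have h2 := hS₀in πb
    rw [hπbv] at h2
    omega
  have hin_b' : G.indeg b₀ = 1 → G'.indeg πb = 1 := by
    intro h1
    have h2 : G'.indeg πb ≤ Digraph'.indeg ⟨S₀⟩ πb + 1 := by
      rw [hG']
      exact indeg_insert_le S₀ (πa, πb) πb
    have h3 := hS₀in πb
    rw [hπbv] at h3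
    have h4 := indeg_pos hnewmem
    omega
  have hout_a : G'.outdeg πa ≤ G.outdeg a₀ := by
    have h1 : G'.outdeg πa ≤ Digraph'.outdeg ⟨S₀⟩ πa + 1 := by
      rw [hG']
      exact outdeg_insert_le S₀ (πa, πb) πa
    have h2 := hS₀out πa
    rw [hπav] at h2
    omega
  -- acyclicity
  have hstep : ∀ s t : {u : V // u ≠ v₀}, (s, t) ∈ G'.edges →
      Relation.TransGen (fun a b => (a, b) ∈ G.edges) s.1 t.1 := by
    intro s t hst
    rcases (hmem' s t).mp hst with ⟨h1, h2⟩ | h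
    · rw [h1, h2]
      exact TransGen.head hva (TransGen.single hvb)
    · exact TransGen.single h
  have hacy : G'.Acyclic := by
    intro u hu
    apply inv.acyclic u.1
    exact transGen_transGen (hu.lift Subtype.val hstep)
  -- reachability
  haveI : Finite V := finite_of_reach G root inv.reach
  have wf := wf_transGen G inv.acyclic
  have key : ∀ u : V, ∀ hu : u ≠ v₀,
      Relation.ReflTransGen (fun a b => (a, b) ∈ G'.edges) root' ⟨u, hu⟩ := by
    intro u
    refine WellFounded.induction wf
      (C := fun u => ∀ hu : u ≠ v₀,
        Relation.ReflTransGen (fun a b => (a, b) ∈ G'.edges) root' ⟨u, hu⟩) u ?_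
    intro x IH hx
    by_cases hxr : x = root
    · subst hxr; exact ReflTransGen.refl
    · obtain ⟨w', hw⟩ := exists_in_edge (inv.reach x) hxr
      by_cases hwv : w' = v₀
      · rw [hwv] at hw
        have hxb : x = b₀ := out_uniq x hw
        have htg : Relation.TransGen (fun a b => (a, b) ∈ G.edges) a₀ x :=
          TransGen.head hva (TransGen.single hw)
        refine (IH a₀ htg ha₀).tail ?_
        exact (hmem' πa ⟨x, hx⟩).mpr (Or.inl ⟨rfl, Subtype.ext hxb⟩)
      · refine (IH w' (TransGen.single hw) hwv).tail ?_
        exact (hmem' ⟨w', hwv⟩ ⟨x, hx⟩).mpr (Or.inr hw)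
  refine ⟨G', root', leaf', ?_, ?_, ?_⟩
  · refine ⟨hacy, ?_, ?_, ?_, ?_, ?_, ?_⟩
    · intro x y h
      exact inv.leaf_inj (congrArg Subtype.val h)
    · rintro ⟨u, hu⟩
      exact key u hu
    · intro x
      by_cases hlb : leaf' x = πb
      · have hlx : leaf x = b₀ := congrArg Subtype.val hlb
        rw [hlb]
        exact hin_b' (hlx ▸ inv.leaf_in x)
      · rw [hin_ne _ hlb]
        exact inv.leaf_in x
    · intro x
      have hla : leaf' x ≠ πa := by
        intro h
        have h0' : leaf x = a₀ := congrArg Subtype.val h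
        have h1 := outdeg_pos hva
        rw [← h0'] at h1
        have h2 := inv.leaf_out x
        omega
      rw [hout_ne _ hla]
      exact inv.leaf_out x
    · have hrb : root' ≠ πb := by
        intro h
        have h0' : root = b₀ := congrArg Subtype.val h
        have h1 := indeg_pos hvb
        rw [← h0'] at h1
        have h2 := inv.root_in
        omega
      rw [hin_ne _ hrb]
      exact inv.root_in
    · intro u h2
      by_cases hub : u = πb
      · subst hub
        have h3 : 2 ≤ G.indeg b₀ := le_trans h2 hin_b
        have h4 := inv.thin b₀ h3
        rw [hout_ne _ (Ne.symm hπab)]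
        exact h4
      · rw [hin_ne _ hub] at h2
        have h4 := inv.thin u.1 h2
        by_cases hua : u = πa
        · subst hua
          exact le_trans hout_a h4
        · rw [hout_ne _ hua]
          exact h4
  · -- cardinality decreases
    have hsub : (G.edges.filter fun e => e.1 ≠ v₀ ∧ e.2 ≠ v₀)
        ⊆ G.edges \ {(a₀, v₀), (v₀, b₀)} := by
      intro e he
      simp only [Finset.mem_filter] at he
      rw [Finset.mem_sdiff]
      refine ⟨he.1, ?_⟩
      simp only [Finset.mem_insert, Finset.mem_singleton]
      rintro (h | h)
      · exact he.2.2 (congrArg Prod.snd h)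
      · exact he.2.1 (congrArg Prod.fst h)
    have hpair : ({(a₀, v₀), (v₀, b₀)} : Finset (V × V)) ⊆ G.edges := by
      intro e he
      simp only [Finset.mem_insert, Finset.mem_singleton] at he
      rcases he with rfl | rfl
      · exact hva
      · exact hvb
    have hpaircard : ({(a₀, v₀), (v₀, b₀)} : Finset (V × V)).card = 2 := by
      rw [Finset.card_insert_of_notMem, Finset.card_singleton]
      simp only [Finset.mem_singleton]
      intro h
      exact ha₀ (congrArg Prod.fst h)
    have h5 : (G.edges.filter fun e => e.1 ≠ v₀ ∧ e.2 ≠ v₀).card ≤ G.edges.card - 2 := by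
      refine le_trans (Finset.card_le_card hsub) ?_
      rw [Finset.card_sdiff_of_subset hpair, hpaircard]
    have h6 : 2 ≤ G.edges.card := by
      calc 2 = ({(a₀, v₀), (v₀, b₀)} : Finset (V × V)).card := hpaircard.symm
      _ ≤ G.edges.card := Finset.card_le_card hpair
    have h7 : G'.edges.card ≤ S₀.card + 1 := by
      rw [hG']
      exact Finset.card_insert_le _ _
    have h8 : S₀.card ≤ (G.edges.filter fun e => e.1 ≠ v₀ ∧ e.2 ≠ v₀).card := by
      rw [hS₀def]
      exact card_restrict_le G v₀ root'
    omega
  · -- transfer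
    intro χ f hf
    refine ⟨fun u => f u.1, fun x => hf x, ?_⟩
    unfold Digraph'.ch
    apply Finset.card_le_card_of_injOn
      (fun p => if (p.1.1, p.2.1) ∈ G.edges then (p.1.1, p.2.1)
        else (if f a₀ ≠ f v₀ then (a₀, v₀) else (v₀, b₀)))
    · rintro ⟨s, t⟩ hst
      simp only [Finset.mem_coe, Finset.mem_filter] at hst ⊢
      obtain ⟨hmem, hbad⟩ := hst
      by_cases hreal : (s.1, t.1) ∈ G.edges
      · rw [if_pos hreal]
        exact ⟨hreal, hbad⟩
      · rw [if_neg hreal]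
        have hst' : s = πa ∧ t = πb := by
          rcases (hmem' s t).mp hmem with h | h
          · exact h
          · exact absurd h hreal
        by_cases hav : f a₀ ≠ f v₀
        · rw [if_pos hav]
          exact ⟨hva, hav⟩
        · rw [if_neg hav]
          push_neg at hav
          refine ⟨hvb, fun h => ?_⟩
          apply hbad
          rw [hst'.1, hst'.2]
          exact hav.trans h
    · rintro ⟨s₁, t₁⟩ h₁ ⟨s₂, t₂⟩ h₂ heq
      simp only [Finset.coe_filter, Set.mem_setOf_eq] at h₁ h₂
      simp only at heq
      have hm₁ := h₁.1
      have hm₂ := h₂.1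
      by_cases hr1 : (s₁.1, t₁.1) ∈ G.edges <;> by_cases hr2 : (s₂.1, t₂.1) ∈ G.edges
      · rw [if_pos hr1, if_pos hr2] at heq
        obtain ⟨e1, e2⟩ := Prod.mk.injEq _ _ _ _ ▸ heq
        simp only [Prod.mk.injEq]
        exact ⟨Subtype.ext e1, Subtype.ext e2⟩
      · rw [if_pos hr1, if_neg hr2] at heq
        exfalso
        by_cases hav : f a₀ ≠ f v₀
        · rw [if_pos hav] at heq
          exact t₁.2 (congrArg Prod.snd heq)
        · rw [if_neg hav] at heq
          exact s₁.2 (congrArg Prod.fst heq)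
      · rw [if_neg hr1, if_pos hr2] at heq
        exfalso
        by_cases hav : f a₀ ≠ f v₀
        · rw [if_pos hav] at heq
          exact t₂.2 (congrArg Prod.snd heq).symm
        · rw [if_neg hav] at heq
          exact s₂.2 (congrArg Prod.fst heq).symm
      · have hp₁ : s₁ = πa ∧ t₁ = πb := by
          rcases (hmem' s₁ t₁).mp hm₁ with h | h
          · exact h
          · exact absurd h hr1
        have hp₂ : s₂ = πa ∧ t₂ = πb := by
          rcases (hmem' s₂ t₂).mp hm₂ with h | h
          · exact h
          · exact absurd h hr2
        simp only [Prod.mk.injEq]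
        exact ⟨hp₁.1.trans hp₂.1.symm, hp₁.2.trans hp₂.2.symm⟩

end Stmt11
namespace Stmt11
open Relation Digraph'

variable {V X C : Type}

theorem step_reroot (G : Digraph' V) (root : V) (leaf : X → V) (inv : Inv G root leaf)
    (c : V) (hrc : (root, c) ∈ G.edges) (hout1 : G.outdeg root = 1)
    (hcl : ¬∃ x, leaf x = c) :
    ∃ (G' : Digraph' {u : V // u ≠ root}) (root' : {u : V // u ≠ root})
      (leaf' : X → {u : V // u ≠ root}),
      Inv G' root' leaf' ∧ G'.edges.card < G.edges.card ∧ Transfer C G leaf G' leaf' := by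
  have hcr : c ≠ root := by
    intro h
    rw [h] at hrc
    exact inv.acyclic root (TransGen.single hrc)
  have out_uniqr : ∀ w, (root, w) ∈ G.edges → w = c :=
    fun w h => out_unique (le_of_eq hout1) h hrc
  have no_in_root : ∀ w, (w, root) ∉ G.edges := by
    intro w h
    have h1 := indeg_pos h
    have h2 := inv.root_in
    omega
  have in_c : ∀ q, (q, c) ∈ G.edges → q = root := by
    intro q hq
    by_contra hqr
    rcases (inv.reach q).cases_head with h | ⟨w, hw1, hw2⟩
    · exact hqr h.symm
    · have hwc : w = c := out_uniqr w hw1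
      rw [hwc] at hw2
      exact inv.acyclic c (TransGen.tail' hw2 hq)
  have hlr : ∀ x, leaf x ≠ root := by
    intro x h
    have h1 := inv.leaf_in x
    rw [h] at h1
    have h2 := inv.root_in
    omega
  set root' : {u : V // u ≠ root} := ⟨c, hcr⟩ with hroot'
  set G' : Digraph' {u : V // u ≠ root} := ⟨restrictEdges G root root'⟩ with hG'
  set leaf' : X → {u : V // u ≠ root} := fun x => ⟨leaf x, hlr x⟩ with hleaf'
  have hdeg_out : ∀ u : {u : V // u ≠ root}, G'.outdeg u = G.outdeg u.1 := by
    intro u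
    rw [hG', outdeg_restrict]
    unfold Digraph'.outdeg
    refine congrArg Finset.card (Finset.filter_congr (fun e he => ?_))
    refine ⟨fun h => h.1, fun h => ⟨h, fun h2 => ?_⟩⟩
    have hm : (e.1, root) ∈ G.edges := by rw [← h2]; simpa using he
    exact no_in_root e.1 hm
  have hdeg_in_ne : ∀ u : {u : V // u ≠ root}, u.1 ≠ c → G'.indeg u = G.indeg u.1 := by
    intro u hu
    rw [hG', indeg_restrict]
    unfold Digraph'.indeg
    refine congrArg Finset.card (Finset.filter_congr (fun e he => ?_))
    refine ⟨fun h => h.1, fun h => ⟨h, fun h1 => ?_⟩⟩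
    have hm : (root, e.2) ∈ G.edges := by rw [← h1]; simpa using he
    exact hu (h ▸ out_uniqr e.2 hm)
  have hdeg_in_c : G'.indeg root' = 0 := by
    rw [hG', indeg_restrict]
    rw [Finset.card_eq_zero, Finset.filter_eq_empty_iff]
    intro e he
    rintro ⟨h1, h2⟩
    have hm : (e.1, (root' : {u : V // u ≠ root}).1) ∈ G.edges := by
      rw [← h1]; simpa using he
    exact h2 (in_c e.1 hm)
  refine ⟨G', root', leaf', ?_, ?_, ?_⟩
  · refine ⟨acyclic_restrict G root root' inv.acyclic, ?_, ?_, ?_, ?_, ?_, ?_⟩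
    · intro x y h
      exact inv.leaf_inj (congrArg Subtype.val h)
    · rintro ⟨x, hx⟩
      rcases (inv.reach x).cases_head with h | ⟨w, hw1, hw2⟩
      · exact absurd h.symm hx
      · have hwc : w = c := out_uniqr w hw1
        rw [hwc] at hw2
        have key : ∀ (a : V) (h : Relation.ReflTransGen (fun p q => (p, q) ∈ G.edges) a x),
            ∀ ha : a ≠ root,
            Relation.ReflTransGen (fun p q => (p, q) ∈ G'.edges) ⟨a, ha⟩ ⟨x, hx⟩ := by
          intro a h
          induction h using Relation.ReflTransGen.head_induction_on with
          | refl => intro ha; exact ReflTransGen.refl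
          | head h' hrest ih =>
            intro ha
            rename_i a' c'
            have hcne : c' ≠ root := by
              intro hh
              rw [hh] at h'
              exact no_in_root a' h'
            refine ReflTransGen.head ?_ (ih hcne)
            show (_, _) ∈ G'.edges
            rw [hG']
            exact (mem_restrictEdges ⟨a', ha⟩ ⟨c', hcne⟩).mpr h'
        exact key c hw2 hcr
    · intro x
      rw [hdeg_in_ne _ (fun h => hcl ⟨x, h⟩)]
      exact inv.leaf_in x
    · intro x
      rw [hdeg_out]
      exact inv.leaf_out x
    · exact hdeg_in_c
    · intro u h2
      by_cases huc : u = root'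
      · rw [huc, hdeg_in_c] at h2
        omega
      · rw [hdeg_in_ne _ (fun h => huc (Subtype.ext h))] at h2
        rw [hdeg_out]
        exact inv.thin u.1 h2
  · refine lt_of_le_of_lt (by rw [hG']; exact card_restrict_le G root root')
      (Finset.card_lt_card ?_)
    rw [Finset.ssubset_iff_of_subset (Finset.filter_subset _ _)]
    exact ⟨(root, c), hrc, by simp⟩
  · intro χ f hf
    exact ⟨fun u => f u.1, fun x => hf x, by rw [hG']; exact ch_restrict_le G root root' f⟩

end Stmt11
namespace Stmt11
open Relation Digraph'

variable {V X C : Type}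

theorem transGen_rank {α : Type*} {r : α → α → Prop} {ρ : α → ℕ}
    (h : ∀ a b, r a b → ρ a < ρ b) {a b : α} (htg : Relation.TransGen r a b) :
    ρ a < ρ b := by
  induction htg with
  | single h' => exact h _ _ h'
  | tail _ h' ih => exact lt_trans ih (h _ _ h')

theorem gadget (G : Digraph' V) (root : V) (leaf : X → V) (inv : Inv G root leaf)
    (c : V) (hrc : (root, c) ∈ G.edges) (hout1 : G.outdeg root = 1)
    (x₀ : X) (hx₀ : leaf x₀ = c) :
    ∃ (V'' : Type) (G'' : Digraph' V'') (root'' : V'') (leaf'' : X → V''),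
      IsPhyloNetwork G'' root'' leaf'' ∧ Transfer C G leaf G'' leaf'' := by
  have out_uniqr : ∀ w, (root, w) ∈ G.edges → w = c :=
    fun w h => out_unique (le_of_eq hout1) h hrc
  have hlr : ∀ x, leaf x ≠ root := by
    intro x h
    have h1 := inv.leaf_in x
    rw [h] at h1
    have h2 := inv.root_in
    omega
  have houtc : G.outdeg c = 0 := hx₀ ▸ inv.leaf_out x₀
  have hallc : ∀ x, leaf x = c := by
    intro x
    rcases (inv.reach (leaf x)).cases_head with h | ⟨w, hw1, hw2⟩
    · exact absurd h.symm (hlr x)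
    · have hwc : w = c := out_uniqr w hw1
      rw [hwc] at hw2
      rcases hw2.cases_head with h | ⟨w2, hw21, _⟩
      · exact h.symm
      · exfalso
        have := outdeg_pos hw21
        omega
  have hXsub : ∀ x : X, x = x₀ := fun x => inv.leaf_inj ((hallc x).trans hx₀.symm)
  set GG : Digraph' (Fin 4 ⊕ X) :=
    ⟨{(Sum.inl 0, Sum.inl 1), (Sum.inl 0, Sum.inl 2), (Sum.inl 1, Sum.inl 2),
      (Sum.inl 1, Sum.inl 3), (Sum.inl 2, Sum.inl 3), (Sum.inl 3, Sum.inr x₀)}⟩ with hGG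
  have hmemE : ∀ e : (Fin 4 ⊕ X) × (Fin 4 ⊕ X), e ∈ GG.edges ↔
      (e = (Sum.inl 0, Sum.inl 1) ∨ e = (Sum.inl 0, Sum.inl 2) ∨ e = (Sum.inl 1, Sum.inl 2) ∨
       e = (Sum.inl 1, Sum.inl 3) ∨ e = (Sum.inl 2, Sum.inl 3) ∨ e = (Sum.inl 3, Sum.inr x₀)) := by
    intro e
    rw [hGG]
    show e ∈ insert _ _ ↔ _
    simp only [Finset.mem_insert, Finset.mem_singleton]
  -- degree computations
  have hfilter : ∀ (P : (Fin 4 ⊕ X) × (Fin 4 ⊕ X) → Prop),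
      (GG.edges.filter P).card =
      (if P (Sum.inl 0, Sum.inl 1) then 1 else 0) + ((if P (Sum.inl 0, Sum.inl 2) then 1 else 0) +
      ((if P (Sum.inl 1, Sum.inl 2) then 1 else 0) + ((if P (Sum.inl 1, Sum.inl 3) then 1 else 0) +
      ((if P (Sum.inl 2, Sum.inl 3) then 1 else 0) + (if P (Sum.inl 3, Sum.inr x₀) then 1 else 0))))) := by
    intro P
    rw [hGG]
    show (Finset.filter P (insert _ (insert _ (insert _ (insert _ (insert _ {_}))))) ).card = _
    rw [Finset.card_filter]
    rw [Finset.sum_insert, Finset.sum_insert, Finset.sum_insert, Finset.sum_insert,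
      Finset.sum_insert, Finset.sum_singleton]
    all_goals simp
  have din0 : GG.indeg (Sum.inl 0) = 0 := by
    unfold Digraph'.indeg; rw [hfilter]; simp
  have din1 : GG.indeg (Sum.inl 1) = 1 := by
    unfold Digraph'.indeg; rw [hfilter]; simp
  have din2 : GG.indeg (Sum.inl 2) = 2 := by
    unfold Digraph'.indeg; rw [hfilter]; simp
  have din3 : GG.indeg (Sum.inl 3) = 2 := by
    unfold Digraph'.indeg; rw [hfilter]; simp
  have dinr : ∀ x : X, GG.indeg (Sum.inr x) = 1 := by
    intro x
    rw [hXsub x]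
    unfold Digraph'.indeg; rw [hfilter]; simp
  have dout0 : GG.outdeg (Sum.inl 0) = 2 := by
    unfold Digraph'.outdeg; rw [hfilter]; simp
  have dout1 : GG.outdeg (Sum.inl 1) = 2 := by
    unfold Digraph'.outdeg; rw [hfilter]; simp
  have dout2 : GG.outdeg (Sum.inl 2) = 1 := by
    unfold Digraph'.outdeg; rw [hfilter]; simp
  have dout3 : GG.outdeg (Sum.inl 3) = 1 := by
    unfold Digraph'.outdeg; rw [hfilter]; simp
  have doutr : ∀ x : X, GG.outdeg (Sum.inr x) = 0 := by
    intro x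
    rw [hXsub x]
    unfold Digraph'.outdeg; rw [hfilter]; simp
  have m1 : (Sum.inl 0, Sum.inl 1) ∈ GG.edges := (hmemE _).mpr (Or.inl rfl)
  have m2 : (Sum.inl 0, Sum.inl 2) ∈ GG.edges := (hmemE _).mpr (Or.inr (Or.inl rfl))
  have m4 : (Sum.inl 1, Sum.inl 3) ∈ GG.edges :=
    (hmemE _).mpr (Or.inr (Or.inr (Or.inr (Or.inl rfl))))
  have m6 : (Sum.inl 3, Sum.inr x₀) ∈ GG.edges :=
    (hmemE _).mpr (Or.inr (Or.inr (Or.inr (Or.inr (Or.inr rfl)))))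
  have hrank : ∀ a b : Fin 4 ⊕ X, (a, b) ∈ GG.edges →
      Sum.elim (fun i : Fin 4 => (i : ℕ)) (fun _ => 4) a
        < Sum.elim (fun i : Fin 4 => (i : ℕ)) (fun _ => 4) b := by
    intro a b h
    rw [hmemE] at h
    rcases h with h | h | h | h | h | h <;>
      (rw [Prod.ext_iff] at h; obtain ⟨h1, h2⟩ := h;
       simp only at h1 h2; subst h1; subst h2; simp only [Sum.elim_inl, Sum.elim_inr]; decide)
  have hfin : ∀ i : Fin 4, i = 0 ∨ i = 1 ∨ i = 2 ∨ i = 3 := by decide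
  refine ⟨Fin 4 ⊕ X, GG, Sum.inl 0, Sum.inr, ⟨?_, ?_, ?_, ?_, ?_, ?_, ?_⟩, ?_⟩
  · intro v hv
    exact absurd (transGen_rank hrank hv) (lt_irrefl _)
  · exact fun a b h => Sum.inr.inj h
  · rintro (i | x)
    · rcases hfin i with rfl | rfl | rfl | rfl
      · exact ReflTransGen.refl
      · exact ReflTransGen.single m1
      · exact ReflTransGen.single m2
      · exact ReflTransGen.head m1 (ReflTransGen.single m4)
    · rw [hXsub x]
      exact ReflTransGen.head m1 (ReflTransGen.head m4 (ReflTransGen.single m6))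
  · rintro (i | x)
    · constructor
      · rintro ⟨x, hx⟩
        simp at hx
      · rintro ⟨h1, h2⟩
        exfalso
        rcases hfin i with rfl | rfl | rfl | rfl
        · rw [din0] at h1; omega
        · rw [dout1] at h2; omega
        · rw [dout2] at h2; omega
        · rw [din3] at h1; omega
    · exact ⟨fun _ => ⟨dinr x, doutr x⟩, fun _ => ⟨x, rfl⟩⟩
  · rw [dout0]
  · exact din0
  · rintro (i | x) hv hnl
    · rcases hfin i with rfl | rfl | rfl | rfl
      · exact absurd rfl hv
      · exact Or.inl ⟨din1, by rw [dout1]⟩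
      · exact Or.inr ⟨by rw [din2], dout2⟩
      · exact Or.inr ⟨by rw [din3], dout3⟩
    · exact absurd ⟨x, rfl⟩ hnl
  · intro χ f hf
    refine ⟨Sum.elim (fun _ => χ x₀) χ, fun x => rfl, ?_⟩
    have hzero : ch GG (Sum.elim (fun _ => χ x₀) χ) = 0 := by
      unfold Digraph'.ch
      rw [Finset.card_eq_zero, Finset.filter_eq_empty_iff]
      intro e he
      rw [hmemE] at he
      rcases he with h | h | h | h | h | h <;> (subst h; simp)
    rw [hzero]
    exact Nat.zero_le _


end Stmt11
namespace Stmt11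
open Relation Digraph'

variable {V X C : Type}

theorem tidy : ∀ (n : ℕ) {W : Type} (G : Digraph' W) (root : W) (leaf : X → W),
    Inv G root leaf → Nonempty X → G.edges.card ≤ n →
    ∃ (V' : Type) (N' : Digraph' V') (root' : V') (leaf' : X → V'),
      IsPhyloNetwork N' root' leaf' ∧ Transfer C G leaf N' leaf' := by
  intro n
  induction n using Nat.strong_induction_on with
  | _ n IH =>
    intro W G root leaf inv hX hcard
    by_cases hdel : ∃ v : W, v ≠ root ∧ ¬(∃ x, leaf x = v) ∧ G.outdeg v = 0
    · obtain ⟨v₀, h1, h2, h3⟩ := hdel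
      obtain ⟨G', root', leaf', inv', hlt, htr⟩ :=
        step_delete (C := C) G root leaf inv v₀ h1 h2 h3
      obtain ⟨V'', N'', root'', leaf'', hphylo, htr2⟩ :=
        IH G'.edges.card (by omega) G' root' leaf' inv' hX le_rfl
      exact ⟨V'', N'', root'', leaf'', hphylo, htr.comp htr2⟩
    · by_cases hsup : ∃ v : W, v ≠ root ∧ ¬(∃ x, leaf x = v) ∧
          G.indeg v = 1 ∧ G.outdeg v = 1
      · obtain ⟨v₀, h1, h2, h3, h4⟩ := hsup
        obtain ⟨G', root', leaf', inv', hlt, htr⟩ :=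
          step_suppress (C := C) G root leaf inv v₀ h1 h2 h3 h4
        obtain ⟨V'', N'', root'', leaf'', hphylo, htr2⟩ :=
          IH G'.edges.card (by omega) G' root' leaf' inv' hX le_rfl
        exact ⟨V'', N'', root'', leaf'', hphylo, htr.comp htr2⟩
      · by_cases hroot2 : 2 ≤ G.outdeg root
        · -- G is already a phylogenetic network
          refine ⟨W, G, root, leaf,
            ⟨inv.acyclic, inv.leaf_inj, inv.reach, ?_, hroot2, inv.root_in, ?_⟩,
            fun χ f hf => ⟨f, hf, le_rfl⟩⟩
          · intro v
            constructor
            · rintro ⟨x, rfl⟩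
              exact ⟨inv.leaf_in x, inv.leaf_out x⟩
            · rintro ⟨hv1, hv2⟩
              by_contra hnl
              have hvr : v ≠ root := by
                intro h
                rw [h] at hv1
                have := inv.root_in
                omega
              exact hdel ⟨v, hvr, hnl, hv2⟩
          · intro v hvr hnl
            have hv1 : 1 ≤ G.indeg v := by
              obtain ⟨w, hw⟩ := exists_in_edge (inv.reach v) hvr
              exact indeg_pos hw
            have hvout : G.outdeg v ≠ 0 := fun h => hdel ⟨v, hvr, hnl, h⟩
            by_cases hv2 : 2 ≤ G.indeg v
            · refine Or.inr ⟨hv2, ?_⟩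
              have := inv.thin v hv2
              omega
            · have hin1 : G.indeg v = 1 := by omega
              refine Or.inl ⟨hin1, ?_⟩
              have : G.outdeg v ≠ 1 := fun h => hsup ⟨v, hvr, hnl, hin1, h⟩
              omega
        · obtain ⟨x₁⟩ := id hX
          have hlr : leaf x₁ ≠ root := by
            intro h
            have h1 := inv.leaf_in x₁
            rw [h] at h1
            have := inv.root_in
            omega
          obtain ⟨c, hrc⟩ : ∃ c, (root, c) ∈ G.edges := by
            rcases (inv.reach (leaf x₁)).cases_head with h | ⟨w, hw1, _⟩
            · exact absurd h.symm hlr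
            · exact ⟨w, hw1⟩
          have hout1 : G.outdeg root = 1 := by
            have := outdeg_pos hrc
            omega
          by_cases hcl : ∃ x, leaf x = c
          · obtain ⟨x₀, hx₀⟩ := hcl
            exact gadget G root leaf inv c hrc hout1 x₀ hx₀
          · obtain ⟨G', root', leaf', inv', hlt, htr⟩ :=
              step_reroot (C := C) G root leaf inv c hrc hout1 hcl
            obtain ⟨V'', N'', root'', leaf'', hphylo, htr2⟩ :=
              IH G'.edges.card (by omega) G' root' leaf' inv' hX le_rfl
            exact ⟨V'', N'', root'', leaf'', hphylo, htr.comp htr2⟩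

/-- every phylogenetic network satisfies `thin` -/
theorem thin_of_phylo {G : Digraph' V} {root : V} {leaf : X → V}
    (hN : IsPhyloNetwork G root leaf) : ∀ u, 2 ≤ G.indeg u → G.outdeg u ≤ 1 := by
  intro u h2
  by_cases hur : u = root
  · rw [hur] at h2
    have := hN.root_in
    omega
  · by_cases hul : ∃ x, leaf x = u
    · have := (hN.leaf_iff u).mp hul
      omega
    · rcases hN.internal u hur hul with ⟨h1, _⟩ | ⟨_, h3⟩
      · omega
      · omega

/-- a phylogenetic network has a leaf, so X is nonempty -/
theorem nonempty_X_of_phylo {G : Digraph' V} {root : V} {leaf : X → V}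
    (hN : IsPhyloNetwork G root leaf) : Nonempty X := by
  haveI : Finite V := finite_of_reach G root hN.reach
  have wfr := wf_transGenRev G hN.acyclic
  obtain ⟨u, -, hu⟩ := wfr.has_min Set.univ ⟨root, trivial⟩
  have hout : G.outdeg u = 0 := by
    by_contra h
    have h1 : 1 ≤ G.outdeg u := by omega
    obtain ⟨w, hw⟩ := exists_out_edge h1
    exact hu w trivial (TransGen.single hw)
  have hur : u ≠ root := by
    intro h
    rw [h] at hout
    have := hN.root_out
    omega
  by_cases hul : ∃ x, leaf x = u
  · obtain ⟨x, -⟩ := hul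
    exact ⟨x⟩
  · rcases hN.internal u hur hul with ⟨-, h2⟩ | ⟨-, h2⟩ <;> omega

end Stmt11
open Stmt11 in
/-- in a hardwired MP network, optimal extensions assign each
    reticulation the same state as all of its parents. -/
theorem stmt11 {V X C : Type} {k : ℕ} (S : Fin k → X → C)
    (N : Digraph' V) (rootN : V) (leafN : X → V) (hN : IsPhyloNetwork N rootN leafN)
    (hopt : ∀ (V' : Type) (N' : Digraph' V') (rootN' : V') (leafN' : X → V'),
      IsPhyloNetwork N' rootN' leafN' → psHardSeq N leafN S ≤ psHardSeq N' leafN' S)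
    (v : V) (hv : 2 ≤ N.indeg v)
    (f : Fin k → V → C) (hext : ∀ i, Extends leafN (S i) (f i))
    (hreal : ∑ i, ch N (f i) = psHardSeq N leafN S) :
    ∀ (i : Fin k) (p : V), (p, v) ∈ N.edges → f i p = f i v := by
  intro i p hpv
  by_contra hne
  have hX : Nonempty X := nonempty_X_of_phylo hN
  set G₀ : Digraph' V := ⟨N.edges.erase (p, v)⟩ with hG₀
  have hsub : G₀.edges ⊆ N.edges := by
    rw [hG₀]
    exact Finset.erase_subset _ _
  have hthinN : ∀ u, 2 ≤ N.indeg u → N.outdeg u ≤ 1 := thin_of_phylo hN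
  have hvleaf : ∀ x, leafN x ≠ v := by
    intro x h
    have h1 := (hN.leaf_iff (leafN x)).mp ⟨x, rfl⟩
    rw [h] at h1
    omega
  haveI : Finite V := finite_of_reach N rootN hN.reach
  have wf := wf_transGen N hN.acyclic
  have inv₀ : Inv G₀ rootN leafN := by
    refine ⟨acyclic_mono hsub hN.acyclic, hN.leaf_inj, ?_, ?_, ?_, ?_, ?_⟩
    · intro u
      refine WellFounded.induction wf
        (C := fun u => Relation.ReflTransGen (fun a b => (a, b) ∈ G₀.edges) rootN u) u ?_
      intro x IHx
      by_cases hxr : x = rootN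
      · subst hxr
        exact Relation.ReflTransGen.refl
      · by_cases hxv : x = v
        · subst hxv
          obtain ⟨q, hq, hqp⟩ := exists_other_in p hv
          refine (IHx q (Relation.TransGen.single hq)).tail ?_
          rw [hG₀]
          exact Finset.mem_erase.mpr ⟨fun h => hqp (congrArg Prod.fst h), hq⟩
        · obtain ⟨w, hw⟩ := exists_in_edge (hN.reach x) hxr
          refine (IHx w (Relation.TransGen.single hw)).tail ?_
          rw [hG₀]
          exact Finset.mem_erase.mpr ⟨fun h => hxv (congrArg Prod.snd h), hw⟩
    · intro x
      unfold Digraph'.indeg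
      rw [hG₀]
      show (Finset.filter (fun e => e.2 = leafN x) (N.edges.erase (p, v))).card = 1
      rw [Finset.filter_erase, Finset.erase_eq_of_notMem]
      · exact ((hN.leaf_iff (leafN x)).mp ⟨x, rfl⟩).1
      · intro h
        exact hvleaf x ((Finset.mem_filter.mp h).2).symm
    · intro x
      have h1 := outdeg_mono hsub (leafN x)
      have h2 := ((hN.leaf_iff (leafN x)).mp ⟨x, rfl⟩).2
      omega
    · have h1 := indeg_mono hsub rootN
      have h2 := hN.root_in
      omega
    · intro u h2
      have h3 := indeg_mono hsub u
      have h4 := hthinN u (by omega)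
      have h5 := outdeg_mono hsub u
      omega
  obtain ⟨V', N', root', leaf', hphylo, htr⟩ :=
    tidy (C := C) G₀.edges.card G₀ rootN leafN inv₀ hX le_rfl
  have hper : ∀ j : Fin k, psHard N' leaf' (S j) ≤ ch G₀ (f j) := by
    intro j
    obtain ⟨f', hf', hch⟩ := htr (S j) (f j) (hext j)
    exact le_trans (Nat.sInf_le ⟨f', hf', rfl⟩) hch
  have hs1 : psHardSeq N' leaf' S ≤ ∑ j, ch G₀ (f j) :=
    Finset.sum_le_sum (fun j _ => hper j)
  have hstrict : ch G₀ (f i) + 1 ≤ ch N (f i) := by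
    unfold Digraph'.ch
    rw [hG₀]
    show (Finset.filter (fun e => f i e.1 ≠ f i e.2) (N.edges.erase (p, v))).card + 1 ≤ _
    rw [Finset.filter_erase]
    have hmem : (p, v) ∈ N.edges.filter (fun e => f i e.1 ≠ f i e.2) :=
      Finset.mem_filter.mpr ⟨hpv, hne⟩
    rw [Finset.card_erase_of_mem hmem]
    have := Finset.card_pos.mpr ⟨_, hmem⟩
    omega
  have hmono : ∀ j : Fin k, ch G₀ (f j) ≤ ch N (f j) := fun j => ch_mono hsub (f j)
  have hs2 : (∑ j, ch G₀ (f j)) < ∑ j, ch N (f j) :=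
    Finset.sum_lt_sum (fun j _ => hmono j)
      ⟨i, Finset.mem_univ i, show ch G₀ (f i) < ch N (f i) by omega⟩
  have hopt' := hopt V' N' root' leaf' hphylo
  have hreal' : ∑ j, ch N (f j) = psHardSeq N leafN S := hreal
  omega
end

section
/- Assume the Tuffley–Steel theorem: for every rooted phylogenetic tree T on X and every sequence S of k characters with at most r states each, max P(S | T) = r^{−PS(S,T)−k} under the N_r-model with no common mechanism. Then for every rooted phylogenetic network N on X, the softwired pseudo-maximum-likelihood satisfies max P_soft(S | N) = r^{−PS_soft(S,N)−k}. Consequently softwired maximum parsimony and softwired pseudo-maximum-likelihood select exactly the same optimal networks. -/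
open scoped Classical

open Digraph'

lemma sSup_eq_psSoft {V X C : Type} (r : ℕ) (hr : 2 ≤ r)
    (maxPtree : ∀ W : Type, Digraph' W → W → (X → W) → (X → C) → ℝ)
    (hTS : ∀ (W : Type) (T : Digraph' W) (rootT : W) (leafT : X → W) (χ : X → C),
      IsPhyloTree T rootT leafT →
      maxPtree W T rootT leafT χ = (r : ℝ) ^ (-(psHard T leafT χ : ℤ) - 1))
    (N : Digraph' V) (leafN : X → V)
    (hdisp : ∃ (W : Type) (T : Digraph' W) (rootT : W) (leafT : X → W),
      IsPhyloTree T rootT leafT ∧ Displays N leafN T leafT)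
    (χ : X → C) :
    sSup {y : ℝ | ∃ (W : Type) (T : Digraph' W) (rootT : W) (leafT : X → W),
        IsPhyloTree T rootT leafT ∧ Displays N leafN T leafT ∧
        y = maxPtree W T rootT leafT χ} =
      (r : ℝ) ^ (-(psSoft N leafN χ : ℤ) - 1) := by
  have hr1 : (1 : ℝ) ≤ (r : ℝ) := by exact_mod_cast Nat.one_le_of_lt hr
  set A : Set ℕ := {n | ∃ (W : Type) (T : Digraph' W) (rootT : W) (leafT : X → W),
    IsPhyloTree T rootT leafT ∧ Displays N leafN T leafT ∧ psHard T leafT χ = n} with hA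
  have hAne : A.Nonempty := by
    obtain ⟨W, T, rootT, leafT, h1, h2⟩ := hdisp
    exact ⟨psHard T leafT χ, W, T, rootT, leafT, h1, h2, rfl⟩
  have hmem : sInf A ∈ A := Nat.sInf_mem hAne
  have hps : psSoft N leafN χ = sInf A := rfl
  rw [hps]
  apply IsGreatest.csSup_eq
  constructor
  · obtain ⟨W, T, rootT, leafT, h1, h2, h3⟩ := hmem
    exact ⟨W, T, rootT, leafT, h1, h2, by rw [hTS W T rootT leafT χ h1, h3]⟩
  · rintro y ⟨W, T, rootT, leafT, h1, h2, rfl⟩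
    rw [hTS W T rootT leafT χ h1]
    apply zpow_le_zpow_right₀ hr1
    have : sInf A ≤ psHard T leafT χ :=
      Nat.sInf_le ⟨W, T, rootT, leafT, h1, h2, rfl⟩
    omega

lemma prod_sSup_eq {V X C : Type} (r : ℕ) (hr : 2 ≤ r) {k : ℕ}
    (maxPtree : ∀ W : Type, Digraph' W → W → (X → W) → (X → C) → ℝ)
    (hTS : ∀ (W : Type) (T : Digraph' W) (rootT : W) (leafT : X → W) (χ : X → C),
      IsPhyloTree T rootT leafT →
      maxPtree W T rootT leafT χ = (r : ℝ) ^ (-(psHard T leafT χ : ℤ) - 1))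
    (N : Digraph' V) (leafN : X → V)
    (hdisp : ∃ (W : Type) (T : Digraph' W) (rootT : W) (leafT : X → W),
      IsPhyloTree T rootT leafT ∧ Displays N leafN T leafT)
    (S : Fin k → X → C) :
    (∏ i, sSup {y : ℝ | ∃ (W : Type) (T : Digraph' W) (rootT : W) (leafT : X → W),
        IsPhyloTree T rootT leafT ∧ Displays N leafN T leafT ∧
        y = maxPtree W T rootT leafT (S i)}) =
      (r : ℝ) ^ (-(psSoftSeq N leafN S : ℤ) - k) := by
  have h0 : (r : ℝ) ≠ 0 := by positivity
  calc (∏ i, sSup {y : ℝ | ∃ (W : Type) (T : Digraph' W) (rootT : W) (leafT : X → W),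
        IsPhyloTree T rootT leafT ∧ Displays N leafN T leafT ∧
        y = maxPtree W T rootT leafT (S i)})
      = ∏ i, (r : ℝ) ^ (-(psSoft N leafN (S i) : ℤ) - 1) := by
        refine Finset.prod_congr rfl fun i _ => ?_
        exact sSup_eq_psSoft r hr maxPtree hTS N leafN hdisp (S i)
    _ = (r : ℝ) ^ (∑ i, (-(psSoft N leafN (S i) : ℤ) - 1)) := by
        induction (Finset.univ : Finset (Fin k)) using Finset.cons_induction with
        | empty => simp
        | cons i s hi ih =>
            rw [Finset.prod_cons, Finset.sum_cons, zpow_add₀ h0, ih]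
    _ = (r : ℝ) ^ (-(psSoftSeq N leafN S : ℤ) - k) := by
        congr 1
        simp [psSoftSeq, Finset.sum_sub_distrib, Nat.cast_sum]

/-- assuming the Tuffley–Steel identity for trees, the softwired
    pseudo-ML of a network equals r^(−PS_soft−k); hence softwired MP and softwired
    pseudo-ML select the same networks. -/
theorem stmt13 {V X C : Type} (r : ℕ) (hr : 2 ≤ r) {k : ℕ}
    (maxPtree : ∀ W : Type, Digraph' W → W → (X → W) → (X → C) → ℝ)
    (hTS : ∀ (W : Type) (T : Digraph' W) (rootT : W) (leafT : X → W) (χ : X → C),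
      IsPhyloTree T rootT leafT →
      maxPtree W T rootT leafT χ = (r : ℝ) ^ (-(psHard T leafT χ : ℤ) - 1))
    (N : Digraph' V) (rootN : V) (leafN : X → V) (hN : IsPhyloNetwork N rootN leafN)
    (hdisp : ∃ (W : Type) (T : Digraph' W) (rootT : W) (leafT : X → W),
      IsPhyloTree T rootT leafT ∧ Displays N leafN T leafT)
    (S : Fin k → X → C) :
    (∏ i, sSup {y : ℝ | ∃ (W : Type) (T : Digraph' W) (rootT : W) (leafT : X → W),
        IsPhyloTree T rootT leafT ∧ Displays N leafN T leafT ∧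
        y = maxPtree W T rootT leafT (S i)}) =
      (r : ℝ) ^ (-(psSoftSeq N leafN S : ℤ) - k) ∧
    ∀ (V' : Type) (N' : Digraph' V') (rootN' : V') (leafN' : X → V'),
      IsPhyloNetwork N' rootN' leafN' →
      (∃ (W : Type) (T : Digraph' W) (rootT : W) (leafT : X → W),
        IsPhyloTree T rootT leafT ∧ Displays N' leafN' T leafT) →
      (psSoftSeq N leafN S ≤ psSoftSeq N' leafN' S ↔
        (∏ i, sSup {y : ℝ | ∃ (W : Type) (T : Digraph' W) (rootT : W) (leafT : X → W),
          IsPhyloTree T rootT leafT ∧ Displays N' leafN' T leafT ∧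
          y = maxPtree W T rootT leafT (S i)}) ≤
        ∏ i, sSup {y : ℝ | ∃ (W : Type) (T : Digraph' W) (rootT : W) (leafT : X → W),
          IsPhyloTree T rootT leafT ∧ Displays N leafN T leafT ∧
          y = maxPtree W T rootT leafT (S i)}) := by
  have hmain := prod_sSup_eq r hr maxPtree hTS N leafN hdisp S
  refine ⟨hmain, fun V' N' rootN' leafN' hN' hdisp' => ?_⟩
  rw [hmain, prod_sSup_eq r hr maxPtree hTS N' leafN' hdisp' S]
  have hr1 : (1 : ℝ) < (r : ℝ) := by exact_mod_cast hr.trans_lt' one_lt_two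
  rw [zpow_le_zpow_iff_right₀ hr1]
  constructor <;> intro h <;> [omega; ·
    have := h; omega]
end
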